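/- arXiv:2210.13786 — 5 statements merged into one kernel-verified Lean document; each statement's English description precedes it below -/
import Mathlib

section
/- For any Schwartz function h on ℝ³, the L² norm of h is bounded by a constant times the L² norm of ⟨x⟩·∇h, i.e. ‖h‖_{L²(ℝ³)} ≲ ‖⟨x⟩ ∇h‖_{L²(ℝ³)}. -/
open MeasureTheory SchwartzMap Set Filter

set_option maxHeartbeats 4000000

/-- **Weighted Hardy inequality in 3D.** For any Schwartz function `h` on `ℝ³`,
`‖h‖_{L²} ≲ ‖⟨x⟩ ∇h‖_{L²}`, with an absolute constant. Stated for the squared norms. -/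
theorem weighted_hardy_3d :
    ∃ C > 0, ∀ h : SchwartzMap (EuclideanSpace ℝ (Fin 3)) ℝ,
      ∫ x, (h x)^2 ≤ C * ∫ x, (1 + ‖x‖^2) * ‖fderiv ℝ h x‖^2 := by
  refine ⟨1, one_pos, fun h => ?_⟩
  have hdiff : Differentiable ℝ (⇑h) := h.differentiable
  have hcont : Continuous (⇑h) := h.continuous
  have hDcont : Continuous fun y => fderiv ℝ (⇑h) y :=
    (h.smooth 1).continuous_fderiv (by simp)
  obtain ⟨Cb, hCb_pos, hCb⟩ := h.decay 0 0
  obtain ⟨C2, hC2_pos, hC2⟩ := h.decay 2 0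
  obtain ⟨C1, hC1_pos, hC1⟩ := h.decay 0 1
  simp only [pow_zero, one_mul, norm_iteratedFDeriv_zero] at hCb hC2 hC1
  have hC1' : ∀ x, ‖fderiv ℝ (⇑h) x‖ ≤ C1 := fun x => by
    have := hC1 x
    rwa [← norm_iteratedFDeriv_fderiv, norm_iteratedFDeriv_zero] at this
  -- integrability of ‖x‖^k * ‖fderiv h x‖
  have iDk : ∀ k : ℕ, Integrable (fun x : EuclideanSpace ℝ (Fin 3) =>
      ‖x‖^k * ‖fderiv ℝ (⇑h) x‖) := fun k => by
    simpa only [fderivCLM_apply] using (SchwartzMap.fderivCLM ℝ _ _ h).integrable_pow_mul volume k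
  -- integrability of h^2
  have ih2 : Integrable (fun x : EuclideanSpace ℝ (Fin 3) => (h x)^2) := by
    refine Integrable.mono' (h.integrable.norm.const_mul Cb)
      ((hcont.pow 2).aestronglyMeasurable) (ae_of_all _ fun x => ?_)
    have h1 : ‖(h x)^2‖ = ‖h x‖ * ‖h x‖ := by
      rw [pow_two, norm_mul]
    rw [h1]
    exact mul_le_mul_of_nonneg_right (hCb x) (norm_nonneg _)
  -- integrability of ‖x‖^2 ‖Dh‖^2
  have iDx2 : Integrable (fun x : EuclideanSpace ℝ (Fin 3) =>
      ‖x‖^2 * ‖fderiv ℝ (⇑h) x‖^2) := by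
    refine Integrable.mono' ((iDk 2).const_mul C1)
      (((continuous_norm.pow 2).mul (hDcont.norm.pow 2)).aestronglyMeasurable)
      (ae_of_all _ fun x => ?_)
    have h1 := hC1' x
    have h2 : (0:ℝ) ≤ ‖fderiv ℝ (⇑h) x‖ := norm_nonneg _
    have h3 : (0:ℝ) ≤ ‖x‖^2 := sq_nonneg _
    have h4 : ‖‖x‖^2 * ‖fderiv ℝ (⇑h) x‖^2‖ = ‖x‖^2 * ‖fderiv ℝ (⇑h) x‖^2 := by
      rw [Real.norm_eq_abs, abs_of_nonneg (by positivity)]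
    rw [h4]
    nlinarith [mul_le_mul_of_nonneg_right h1 (mul_nonneg h3 h2)]
  -- integrability of (1+‖x‖^2) ‖Dh‖^2
  have iD2w : Integrable (fun x : EuclideanSpace ℝ (Fin 3) =>
      (1 + ‖x‖^2) * ‖fderiv ℝ (⇑h) x‖^2) := by
    refine Integrable.mono' (((iDk 0).const_mul C1).add ((iDk 2).const_mul C1))
      (((continuous_const.add (continuous_norm.pow 2)).mul
        (hDcont.norm.pow 2)).aestronglyMeasurable)
      (ae_of_all _ fun x => ?_)
    have h1 := hC1' x
    have h2 : (0:ℝ) ≤ ‖fderiv ℝ (⇑h) x‖ := norm_nonneg _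
    have h3 : (0:ℝ) ≤ ‖x‖^2 := sq_nonneg _
    have h4 : ‖(1 + ‖x‖^2) * ‖fderiv ℝ (⇑h) x‖^2‖
        = (1 + ‖x‖^2) * ‖fderiv ℝ (⇑h) x‖^2 := by
      rw [Real.norm_eq_abs, abs_of_nonneg (by positivity)]
    rw [h4]
    simp only [Pi.add_apply, pow_zero, one_mul]
    nlinarith [mul_le_mul_of_nonneg_right h1 h2,
      mul_le_mul_of_nonneg_right h1 (mul_nonneg h3 h2)]
  -- the majorant Ψ
  set Ψ : EuclideanSpace ℝ (Fin 3) → ℝ :=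
    fun y => (2*Cb) * (‖y‖ * ‖fderiv ℝ (⇑h) y‖) with hΨdef
  have iΨ : Integrable Ψ := by
    simpa only [hΨdef, pow_one] using (iDk 1).const_mul (2*Cb)
  -- pointwise bound for the integrand
  have hbound : ∀ t : ℝ, 1 ≤ t → ∀ x : EuclideanSpace ℝ (Fin 3),
      ‖2 * h (t•x) * (fderiv ℝ (⇑h) (t•x) x)‖ ≤ Ψ (t • x) := by
    intro t ht x
    have h1 : ‖fderiv ℝ (⇑h) (t•x) x‖ ≤ ‖fderiv ℝ (⇑h) (t•x)‖ * ‖x‖ :=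
      (fderiv ℝ (⇑h) (t•x)).le_opNorm x
    have h2 : ‖h (t•x)‖ ≤ Cb := hCb _
    have h3 : ‖x‖ ≤ ‖t • x‖ := by
      rw [norm_smul, Real.norm_eq_abs, abs_of_pos (by linarith)]
      nlinarith [norm_nonneg x]
    have h4 : ‖2 * h (t•x) * (fderiv ℝ (⇑h) (t•x) x)‖
        ≤ 2 * ‖h (t•x)‖ * ‖fderiv ℝ (⇑h) (t•x) x‖ := by
      rw [norm_mul, norm_mul]
      simp [Real.norm_eq_abs]
    refine h4.trans ?_
    simp only [hΨdef]
    have s1 : 2 * ‖h (t•x)‖ * ‖fderiv ℝ (⇑h) (t•x) x‖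
        ≤ 2 * Cb * ‖fderiv ℝ (⇑h) (t•x) x‖ :=
      by
      have h2b : 2 * ‖h (t•x)‖ ≤ 2 * Cb := by linarith
      exact mul_le_mul_of_nonneg_right h2b (norm_nonneg _)
    have s2 : ‖fderiv ℝ (⇑h) (t•x) x‖ ≤ ‖t•x‖ * ‖fderiv ℝ (⇑h) (t•x)‖ := by
      refine h1.trans ?_
      calc ‖fderiv ℝ (⇑h) (t•x)‖ * ‖x‖ ≤ ‖fderiv ℝ (⇑h) (t•x)‖ * ‖t•x‖ :=
            mul_le_mul_of_nonneg_left h3 (norm_nonneg _)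
        _ = ‖t•x‖ * ‖fderiv ℝ (⇑h) (t•x)‖ := mul_comm _ _
    calc 2 * ‖h (t•x)‖ * ‖fderiv ℝ (⇑h) (t•x) x‖
        ≤ 2 * Cb * ‖fderiv ℝ (⇑h) (t•x) x‖ := s1
      _ ≤ 2 * Cb * (‖t•x‖ * ‖fderiv ℝ (⇑h) (t•x)‖) :=
          mul_le_mul_of_nonneg_left s2 (by positivity)
  -- slice integrability
  have hslice : ∀ t : ℝ, 1 ≤ t → Integrable (fun x : EuclideanSpace ℝ (Fin 3) =>
      2 * h (t•x) * (fderiv ℝ (⇑h) (t•x) x)) := by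
    intro t ht
    have ht0 : t ≠ 0 := by intro hc; rw [hc] at ht; linarith
    have hsm : Continuous fun x : EuclideanSpace ℝ (Fin 3) => t • x :=
      continuous_id.const_smul t
    refine Integrable.mono' (iΨ.comp_smul ht0)
      (((continuous_const.mul (hcont.comp hsm)).mul
        ((hDcont.comp hsm).clm_apply continuous_id)).aestronglyMeasurable)
      (ae_of_all _ fun x => hbound t ht x)
  -- ae x ≠ 0
  have hzero_ae : ∀ᵐ x : EuclideanSpace ℝ (Fin 3) ∂volume, x ≠ 0 := by
    rw [ae_iff]
    simp only [not_not, Set.setOf_eq_eq_singleton]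
    exact measure_singleton 0
  -- Step A : pointwise representation
  have stepA : ∀ x : EuclideanSpace ℝ (Fin 3), x ≠ 0 →
      (h x)^2 = - ∫ t in Ioi (1:ℝ), 2 * h (t•x) * (fderiv ℝ (⇑h) (t•x) x) := by
    intro x hx
    have hxn : 0 < ‖x‖ := norm_pos_iff.2 hx
    have hder : ∀ t : ℝ, HasDerivAt (fun s : ℝ => (h (s•x))^2)
        (2 * h (t•x) * (fderiv ℝ (⇑h) (t•x) x)) t := by
      intro t
      have h1 : HasDerivAt (fun s : ℝ => s • x) ((1:ℝ) • x) t :=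
        (hasDerivAt_id t).smul_const x
      have h2 : HasDerivAt (fun s : ℝ => h (s • x)) (fderiv ℝ (⇑h) (t•x) x) t := by
        have h3 := ((hdiff (t•x)).hasFDerivAt).comp_hasDerivAt t h1
        rw [one_smul] at h3
        exact h3
      have h5 := h2.pow 2
      refine h5.congr_deriv ?_
      push_cast
      ring
    have hcw : ContinuousWithinAt (fun s : ℝ => (h (s•x))^2) (Ici 1) 1 :=
      ((hcont.comp (continuous_id.smul continuous_const)).pow 2).continuousWithinAt
    have hint : IntegrableOn (fun t : ℝ => 2 * h (t•x) * (fderiv ℝ (⇑h) (t•x) x))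
        (Ioi 1) volume := by
      have hmaj : IntegrableOn (fun t : ℝ => (2*C2*C1/‖x‖) * t ^ (-2:ℝ)) (Ioi 1) volume :=
        (integrableOn_Ioi_rpow_of_lt (by norm_num) one_pos).const_mul _
      have hsm : Continuous fun t : ℝ => t • x := continuous_id.smul continuous_const
      refine Integrable.mono' hmaj
        (((continuous_const.mul (hcont.comp hsm)).mul
          ((hDcont.comp hsm).clm_apply continuous_const)).aestronglyMeasurable)
        ?_
      filter_upwards [ae_restrict_mem measurableSet_Ioi] with t ht
      have ht0 : (0:ℝ) < t := lt_trans one_pos ht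
      have hrp : t ^ (-2:ℝ) = (t^2)⁻¹ := by
        rw [show (-2:ℝ) = -((2:ℕ):ℝ) by norm_num, Real.rpow_neg ht0.le,
          Real.rpow_natCast]
      have hb1 : ‖t•x‖^2 * ‖h (t•x)‖ ≤ C2 := hC2 (t•x)
      have hb2 : ‖fderiv ℝ (⇑h) (t•x) x‖ ≤ C1 * ‖x‖ := by
        refine ((fderiv ℝ (⇑h) (t•x)).le_opNorm x).trans ?_
        exact mul_le_mul_of_nonneg_right (hC1' _) (norm_nonneg _)
      have hns : ‖t•x‖^2 = t^2 * ‖x‖^2 := by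
        rw [norm_smul, Real.norm_eq_abs, mul_pow, sq_abs]
      rw [hns] at hb1
      have h4 : ‖2 * h (t•x) * (fderiv ℝ (⇑h) (t•x) x)‖
          ≤ 2 * ‖h (t•x)‖ * ‖fderiv ℝ (⇑h) (t•x) x‖ := by
        rw [norm_mul, norm_mul]; simp [Real.norm_eq_abs]
      rw [hrp]
      refine h4.trans ?_
      have heq : 2*C2*C1/‖x‖ * (t^2)⁻¹ = (2*C2*C1) / (t^2*‖x‖) := by
        field_simp
      rw [heq, le_div_iff₀ (by positivity)]
      have hp : (t^2*‖x‖^2*‖h (t•x)‖) * ‖fderiv ℝ (⇑h) (t•x) x‖ ≤ C2 * (C1 * ‖x‖) :=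
        mul_le_mul hb1 hb2 (norm_nonneg _) hC2_pos.le
      rw [← mul_le_mul_iff_of_pos_right hxn]
      calc 2 * ‖h (t•x)‖ * ‖fderiv ℝ (⇑h) (t•x) x‖ * (t^2*‖x‖) * ‖x‖
          = 2 * ((t^2*‖x‖^2*‖h (t•x)‖) * ‖fderiv ℝ (⇑h) (t•x) x‖) := by ring
        _ ≤ 2 * (C2 * (C1 * ‖x‖)) := by linarith [hp]
        _ = 2*C2*C1*‖x‖ := by ring
    have htend : Tendsto (fun t : ℝ => (h (t•x))^2) atTop (nhds 0) := by
      have hlim : Tendsto (fun t : ℝ => (C2^2/‖x‖^4) * ((t^4)⁻¹)) atTop (nhds 0) := by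
        have hmono : Tendsto (fun t : ℝ => t^4) atTop atTop :=
          tendsto_pow_atTop (by norm_num)
        have h1 : Tendsto (fun t : ℝ => (t^4)⁻¹) atTop (nhds 0) :=
          hmono.inv_tendsto_atTop
        simpa using h1.const_mul (C2^2/‖x‖^4)
      refine squeeze_zero' ?_ ?_ hlim
      · filter_upwards with t; positivity
      · filter_upwards [eventually_ge_atTop (1:ℝ)] with t ht
        have ht0 : (0:ℝ) < t := lt_of_lt_of_le one_pos ht
        have hb1 : t^2*‖x‖^2 * ‖h (t•x)‖ ≤ C2 := by
          have h1 := hC2 (t•x)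
          rwa [norm_smul, Real.norm_eq_abs, mul_pow, sq_abs] at h1
        have habs : (h (t•x))^2 = ‖h (t•x)‖^2 := by
          rw [Real.norm_eq_abs, sq_abs]
        rw [habs]
        have hsq : (t^2*‖x‖^2*‖h (t•x)‖)^2 ≤ C2^2 := by
          have h0 : 0 ≤ t^2*‖x‖^2*‖h (t•x)‖ := by positivity
          nlinarith
        have heq : C2^2/‖x‖^4 * (t^4)⁻¹ = C2^2 / (t^4 * ‖x‖^4) := by
          field_simp
        rw [heq, le_div_iff₀ (by positivity)]
        nlinarith [hsq]
    have hkey := integral_Ioi_of_hasDerivAt_of_tendsto hcw (fun t _ => hder t) hint htend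
    rw [hkey]
    simp
  -- Step B : integrate the representation
  have hA : ∫ x : EuclideanSpace ℝ (Fin 3), (h x)^2
      = - ∫ x : EuclideanSpace ℝ (Fin 3), ∫ t in Ioi (1:ℝ),
          2 * h (t•x) * (fderiv ℝ (⇑h) (t•x) x) := by
    rw [← integral_neg]
    exact integral_congr_ae (hzero_ae.mono fun x hx => stepA x hx)
  -- product measurability & integrability
  have hGcont : Continuous (fun p : ℝ × EuclideanSpace ℝ (Fin 3) =>
      2 * h (p.1 • p.2) * (fderiv ℝ (⇑h) (p.1 • p.2) p.2)) := by
    have hs : Continuous fun p : ℝ × EuclideanSpace ℝ (Fin 3) => p.1 • p.2 :=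
      continuous_fst.smul continuous_snd
    exact (continuous_const.mul (hcont.comp hs)).mul
      ((hDcont.comp hs).clm_apply continuous_snd)
  have hGint : Integrable (Function.uncurry fun (t : ℝ) (x : EuclideanSpace ℝ (Fin 3)) =>
      2 * h (t•x) * (fderiv ℝ (⇑h) (t•x) x))
      ((volume.restrict (Ioi 1)).prod volume) := by
    have hmeas : AEStronglyMeasurable (Function.uncurry
        fun (t : ℝ) (x : EuclideanSpace ℝ (Fin 3)) =>
          2 * h (t•x) * (fderiv ℝ (⇑h) (t•x) x))
        ((volume.restrict (Ioi (1:ℝ))).prod volume) := hGcont.aestronglyMeasurable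
    rw [integrable_prod_iff hmeas]
    constructor
    · filter_upwards [ae_restrict_mem measurableSet_Ioi] with t ht
      exact hslice t (le_of_lt ht)
    · have hmaj : IntegrableOn (fun t : ℝ => (∫ y, Ψ y) * t ^ (-3:ℝ)) (Ioi 1) volume :=
        (integrableOn_Ioi_rpow_of_lt (by norm_num) one_pos).const_mul _
      refine Integrable.mono' hmaj
        (hGcont.norm.aestronglyMeasurable.integral_prod_right') ?_
      filter_upwards [ae_restrict_mem measurableSet_Ioi] with t ht
      have ht0 : (0:ℝ) < t := lt_trans one_pos ht
      have ht1 : (1:ℝ) ≤ t := le_of_lt ht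
      have hrp : t ^ (-3:ℝ) = (t^3)⁻¹ := by
        rw [show (-3:ℝ) = -((3:ℕ):ℝ) by norm_num, Real.rpow_neg ht0.le,
          Real.rpow_natCast]
      have hcomp : ∫ x : EuclideanSpace ℝ (Fin 3), Ψ (t • x) = (t^3)⁻¹ * ∫ y, Ψ y := by
        rw [MeasureTheory.Measure.integral_comp_smul volume Ψ t]
        simp only [finrank_euclideanSpace, Fintype.card_fin, smul_eq_mul]
        rw [abs_of_pos (by positivity)]
      rw [Real.norm_eq_abs, abs_of_nonneg (integral_nonneg fun x => norm_nonneg _)]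
      calc ∫ x : EuclideanSpace ℝ (Fin 3), ‖2 * h (t•x) * (fderiv ℝ (⇑h) (t•x) x)‖
          ≤ ∫ x : EuclideanSpace ℝ (Fin 3), Ψ (t•x) :=
            integral_mono (hslice t ht1).norm (iΨ.comp_smul (ne_of_gt ht0))
              (fun x => hbound t ht1 x)
        _ = (t^3)⁻¹ * ∫ y, Ψ y := hcomp
        _ = (∫ y, Ψ y) * t ^ (-3:ℝ) := by rw [hrp]; ring
  have hswap : (∫ t in Ioi (1:ℝ), ∫ x : EuclideanSpace ℝ (Fin 3),
        2 * h (t•x) * (fderiv ℝ (⇑h) (t•x) x))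
      = ∫ x : EuclideanSpace ℝ (Fin 3), ∫ t in Ioi (1:ℝ),
        2 * h (t•x) * (fderiv ℝ (⇑h) (t•x) x) :=
    integral_integral_swap hGint
  set I : ℝ := ∫ y : EuclideanSpace ℝ (Fin 3), 2 * h y * (fderiv ℝ (⇑h) y y) with hIdef
  have hinner : ∀ t ∈ Ioi (1:ℝ), (∫ x : EuclideanSpace ℝ (Fin 3),
      2 * h (t•x) * (fderiv ℝ (⇑h) (t•x) x)) = (t^4)⁻¹ * I := by
    intro t ht
    have ht0 : (0:ℝ) < t := lt_trans one_pos ht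
    have key : ∀ x : EuclideanSpace ℝ (Fin 3),
        2 * h (t•x) * (fderiv ℝ (⇑h) (t•x) x)
        = t⁻¹ * (2 * h (t•x) * (fderiv ℝ (⇑h) (t•x) (t•x))) := by
      intro x
      have hmap : fderiv ℝ (⇑h) (t•x) (t•x) = t * (fderiv ℝ (⇑h) (t•x) x) := by
        rw [(fderiv ℝ (⇑h) (t•x)).map_smul, smul_eq_mul]
      rw [hmap]
      field_simp
    simp_rw [key]
    rw [integral_const_mul]
    have hcs := MeasureTheory.Measure.integral_comp_smul volume
      (fun y : EuclideanSpace ℝ (Fin 3) => 2 * h y * (fderiv ℝ (⇑h) y y)) t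
    simp only [finrank_euclideanSpace, Fintype.card_fin, smul_eq_mul] at hcs
    rw [hcs, abs_of_pos (by positivity : (0:ℝ) < (t^3)⁻¹), ← hIdef]
    have h4 : t * t^3 = t^4 := by ring
    rw [← mul_assoc, ← mul_inv, h4]
  have houter : ∫ x : EuclideanSpace ℝ (Fin 3), (h x)^2 = -(3⁻¹ * I) := by
    rw [hA, ← hswap]
    rw [setIntegral_congr_fun measurableSet_Ioi fun t ht => hinner t ht]
    rw [integral_mul_const]
    have hval : ∫ t in Ioi (1:ℝ), (t^4)⁻¹ = 3⁻¹ := by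
      have hcong : EqOn (fun t : ℝ => (t^4)⁻¹) (fun t : ℝ => t ^ (-4:ℝ)) (Ioi 1) := by
        intro t ht
        have ht0 : (0:ℝ) < t := lt_trans one_pos ht
        show (t^4)⁻¹ = t ^ (-4:ℝ)
        rw [show (-4:ℝ) = -((4:ℕ):ℝ) by norm_num, Real.rpow_neg ht0.le,
          Real.rpow_natCast]
      rw [setIntegral_congr_fun measurableSet_Ioi hcong,
        integral_Ioi_rpow_of_lt (by norm_num) one_pos]
      norm_num
    rw [hval]
  -- final assembly
  have iF : Integrable (fun y : EuclideanSpace ℝ (Fin 3) =>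
      2 * h y * (fderiv ℝ (⇑h) y y)) := by
    refine Integrable.mono' ((iDk 1).const_mul (2*Cb))
      (((continuous_const.mul hcont).mul
        (hDcont.clm_apply continuous_id)).aestronglyMeasurable)
      (ae_of_all _ fun y => ?_)
    have h1 : ‖fderiv ℝ (⇑h) y y‖ ≤ ‖fderiv ℝ (⇑h) y‖ * ‖y‖ :=
      (fderiv ℝ (⇑h) y).le_opNorm y
    have h4 : ‖2 * h y * (fderiv ℝ (⇑h) y y)‖ ≤ 2 * ‖h y‖ * ‖fderiv ℝ (⇑h) y y‖ := by
      rw [norm_mul, norm_mul]; simp [Real.norm_eq_abs]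
    refine h4.trans ?_
    have h2 := hCb y
    rw [pow_one]
    calc 2 * ‖h y‖ * ‖fderiv ℝ (⇑h) y y‖
        ≤ 2 * Cb * ‖fderiv ℝ (⇑h) y y‖ :=
          mul_le_mul_of_nonneg_right (by linarith) (norm_nonneg _)
      _ ≤ 2 * Cb * (‖y‖ * ‖fderiv ℝ (⇑h) y‖) :=
          mul_le_mul_of_nonneg_left (h1.trans (le_of_eq (mul_comm _ _)))
            (by positivity)
  have hIabs : |I| ≤ (∫ x : EuclideanSpace ℝ (Fin 3), (h x)^2)
      + ∫ x : EuclideanSpace ℝ (Fin 3), ‖x‖^2 * ‖fderiv ℝ (⇑h) x‖^2 := by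
    calc |I| = ‖I‖ := (Real.norm_eq_abs I).symm
      _ ≤ ∫ y : EuclideanSpace ℝ (Fin 3), ‖2 * h y * (fderiv ℝ (⇑h) y y)‖ := by
          rw [hIdef]; exact norm_integral_le_integral_norm _
      _ ≤ (∫ x : EuclideanSpace ℝ (Fin 3), (h x)^2)
          + ∫ x : EuclideanSpace ℝ (Fin 3), ‖x‖^2 * ‖fderiv ℝ (⇑h) x‖^2 := by
          rw [← integral_add ih2 iDx2]
          refine integral_mono iF.norm (ih2.add iDx2) fun y => ?_
          have h1 : ‖fderiv ℝ (⇑h) y y‖ ≤ ‖fderiv ℝ (⇑h) y‖ * ‖y‖ :=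
            (fderiv ℝ (⇑h) y).le_opNorm y
          have h4 : ‖2 * h y * (fderiv ℝ (⇑h) y y)‖
              ≤ 2 * ‖h y‖ * ‖fderiv ℝ (⇑h) y y‖ := by
            rw [norm_mul, norm_mul]; simp [Real.norm_eq_abs]
          refine h4.trans ?_
          have hy2 : (h y)^2 = ‖h y‖^2 := by rw [Real.norm_eq_abs, sq_abs]
          rw [hy2]
          have hstep : 2 * ‖h y‖ * ‖fderiv ℝ (⇑h) y y‖
              ≤ 2 * ‖h y‖ * (‖fderiv ℝ (⇑h) y‖ * ‖y‖) :=
            mul_le_mul_of_nonneg_left h1 (by positivity)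
          nlinarith [sq_nonneg (‖h y‖ - ‖y‖*‖fderiv ℝ (⇑h) y‖), hstep]
  have hB' : ∫ x : EuclideanSpace ℝ (Fin 3), ‖x‖^2 * ‖fderiv ℝ (⇑h) x‖^2
      ≤ ∫ x : EuclideanSpace ℝ (Fin 3), (1+‖x‖^2) * ‖fderiv ℝ (⇑h) x‖^2 :=
    integral_mono iDx2 iD2w fun x => by
      nlinarith [sq_nonneg ‖fderiv ℝ (⇑h) x‖, sq_nonneg ‖x‖]
  have hAnn : 0 ≤ ∫ x : EuclideanSpace ℝ (Fin 3), (h x)^2 :=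
    integral_nonneg fun x => sq_nonneg _
  have h3A : 3 * ∫ x : EuclideanSpace ℝ (Fin 3), (h x)^2 = -I := by
    rw [houter]; ring
  have hneg : -I ≤ |I| := neg_le_abs I
  rw [one_mul]
  linarith [hIabs, hB', h3A, hAnn, hneg]
end

section
/- Let u : [0,∞) × ℝ³ → ℝ be twice continuously differentiable, let t > 0 and x ∈ ℝ³ with r = |x|. Then (t² − r²) Δu = r² □u + r ∂_r u − 3t ∂_t u − Σ_{i=1}^{3} x_i ∂_t Ω_{i0}u + t Σ_{i=1}^{3} ∂_i Ω_{i0}u, where Ω_{i0} = t∂_i + x_i ∂_t, □ = ∂_{tt} − Δ, and ∂_r = (x/|x|)·∇. -/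
open Real MeasureTheory

/-- Partial derivative in the `j`-th space-time coordinate (`0` = time, `1,2,3` = space). -/
noncomputable def pd (j : Fin 4) (U : (Fin 4 → ℝ) → ℝ) : (Fin 4 → ℝ) → ℝ :=
  fun z => fderiv ℝ U z (Pi.single j 1)

/-- Spatial Laplacian. -/
noncomputable def lap (U : (Fin 4 → ℝ) → ℝ) : (Fin 4 → ℝ) → ℝ :=
  fun z => ∑ i : Fin 3, pd i.succ (pd i.succ U) z

/-- The d'Alembertian `□ = ∂_tt − Δ`. -/
noncomputable def box (U : (Fin 4 → ℝ) → ℝ) : (Fin 4 → ℝ) → ℝ :=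
  fun z => pd 0 (pd 0 U) z - lap U z

/-- The spatial radius `r = |x|`. -/
noncomputable def rad (z : Fin 4 → ℝ) : ℝ := Real.sqrt (∑ i : Fin 3, (z i.succ)^2)

/-- Lorentz boost `Ω_{i0} = t∂_i + x_i ∂_t`. -/
noncomputable def boost (i : Fin 3) (U : (Fin 4 → ℝ) → ℝ) : (Fin 4 → ℝ) → ℝ :=
  fun z => z 0 * pd i.succ U z + z i.succ * pd 0 U z

/-- Rotation `Ω_{ij} = x_i∂_j − x_j∂_i`. -/
noncomputable def rot (i j : Fin 3) (U : (Fin 4 → ℝ) → ℝ) : (Fin 4 → ℝ) → ℝ :=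
  fun z => z i.succ * pd j.succ U z - z j.succ * pd i.succ U z

/-- Radial derivative `∂_r = (x/r)·∇`. -/
noncomputable def dr (U : (Fin 4 → ℝ) → ℝ) : (Fin 4 → ℝ) → ℝ :=
  fun z => ∑ i : Fin 3, (z i.succ / rad z) * pd i.succ U z

/-- Japanese bracket `⟨s⟩ = √(1+s²)`. -/
noncomputable def jb (s : ℝ) : ℝ := Real.sqrt (1 + s^2)

/-- The eleven operators `Γ^{≤1}`: identity, `∂_t`, `∂_i`, boosts, rotations. -/
noncomputable def gam : Fin 11 → ((Fin 4 → ℝ) → ℝ) → ((Fin 4 → ℝ) → ℝ) :=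
  ![id, pd 0, pd 1, pd 2, pd 3, boost 0, boost 1, boost 2, rot 0 1, rot 0 2, rot 1 2]

/-- `|∂Γ^{≤1}u|`: the ℓ² norm of all space-time first derivatives of all `Γ^{≤1}u`. -/
noncomputable def dGam (U : (Fin 4 → ℝ) → ℝ) (z : Fin 4 → ℝ) : ℝ :=
  Real.sqrt (∑ a : Fin 4, ∑ k : Fin 11, (pd a (gam k U) z)^2)

/-- **Key algebraic identity** (eq. (2.30) of the paper): for `u` of class `C²` on
`(0,∞) × ℝ³`, `t > 0`, `x ≠ 0`:
`(t² − r²) Δu = r² □u + r ∂_r u − 3t ∂_t u − Σ_i x_i ∂_t Ω_{i0}u + t Σ_i ∂_i Ω_{i0}u`. -/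
theorem lap_identity (U : (Fin 4 → ℝ) → ℝ)
    (hU : ContDiffOn ℝ 2 U {z : Fin 4 → ℝ | 0 < z 0})
    (z : Fin 4 → ℝ) (ht : 0 < z 0) (hr : rad z ≠ 0) :
    ((z 0)^2 - (rad z)^2) * lap U z =
      (rad z)^2 * box U z + rad z * dr U z - 3 * z 0 * pd 0 U z
        - (∑ i : Fin 3, z i.succ * pd 0 (boost i U) z)
        + z 0 * ∑ i : Fin 3, pd i.succ (boost i U) z := by
  have hsopen : IsOpen {z : Fin 4 → ℝ | 0 < z 0} :=
    isOpen_lt continuous_const (continuous_apply 0)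
  have hmem : {z : Fin 4 → ℝ | 0 < z 0} ∈ nhds z := hsopen.mem_nhds ht
  have hU1 : ContDiffOn ℝ 1 (fun y => fderiv ℝ U y) {z : Fin 4 → ℝ | 0 < z 0} :=
    hU.fderiv_of_isOpen hsopen (by norm_num)
  set f2 := fderiv ℝ (fun y => fderiv ℝ U y) z with hf2
  have hF : HasFDerivAt (fun y => fderiv ℝ U y) f2 z :=
    (((hU1.differentiableOn (by norm_num)).differentiableAt hmem)).hasFDerivAt
  have hev : ∀ᶠ y in nhds z, HasFDerivAt U (fderiv ℝ U y) y := by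
    filter_upwards [hmem] with y hy
    exact ((hU.differentiableOn (by norm_num)).differentiableAt (hsopen.mem_nhds hy)).hasFDerivAt
  have hsym : ∀ v w, f2 v w = f2 w v :=
    fun v w => second_derivative_symmetric_of_eventually hev hF v w
  have hg : ∀ b : Fin 4, HasFDerivAt (pd b U)
      ((ContinuousLinearMap.apply ℝ ℝ (Pi.single b 1 : Fin 4 → ℝ)).comp f2) z :=
    fun b => (ContinuousLinearMap.apply ℝ ℝ (Pi.single b 1 : Fin 4 → ℝ)).hasFDerivAt.comp z hF
  have hpdpd : ∀ a b : Fin 4, pd a (pd b U) z =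
      f2 (Pi.single a 1) (Pi.single b 1) := by
    intro a b
    show fderiv ℝ (pd b U) z (Pi.single a 1) = _
    rw [(hg b).fderiv]
    rfl
  have hboost : ∀ (i : Fin 3) (a : Fin 4), pd a (boost i U) z =
      z 0 * f2 (Pi.single a 1) (Pi.single i.succ 1)
        + pd i.succ U z * (Pi.single a 1 : Fin 4 → ℝ) 0
        + (z i.succ * f2 (Pi.single a 1) (Pi.single 0 1)
        + pd 0 U z * (Pi.single a 1 : Fin 4 → ℝ) i.succ) := by
    intro i a
    have h0 : HasFDerivAt (fun w : Fin 4 → ℝ => w 0)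
        (ContinuousLinearMap.proj 0 : (Fin 4 → ℝ) →L[ℝ] ℝ) z :=
      (ContinuousLinearMap.proj 0 : (Fin 4 → ℝ) →L[ℝ] ℝ).hasFDerivAt
    have hi : HasFDerivAt (fun w : Fin 4 → ℝ => w i.succ)
        (ContinuousLinearMap.proj i.succ : (Fin 4 → ℝ) →L[ℝ] ℝ) z :=
      (ContinuousLinearMap.proj i.succ : (Fin 4 → ℝ) →L[ℝ] ℝ).hasFDerivAt
    have hb : HasFDerivAt (boost i U)
        ((z 0 • (ContinuousLinearMap.apply ℝ ℝ (Pi.single i.succ 1 : Fin 4 → ℝ)).comp f2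
          + pd i.succ U z • (ContinuousLinearMap.proj 0 : (Fin 4 → ℝ) →L[ℝ] ℝ))
        + (z i.succ • (ContinuousLinearMap.apply ℝ ℝ (Pi.single 0 1 : Fin 4 → ℝ)).comp f2
          + pd 0 U z • (ContinuousLinearMap.proj i.succ : (Fin 4 → ℝ) →L[ℝ] ℝ))) z :=
      (h0.mul (hg i.succ)).add (hi.mul (hg 0))
    show fderiv ℝ (boost i U) z (Pi.single a 1) = _
    rw [hb.fderiv]
    simp [ContinuousLinearMap.proj_apply]
  have e0 : ((0 : Fin 3).succ) = (1 : Fin 4) := rfl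
  have e1 : ((1 : Fin 3).succ) = (2 : Fin 4) := rfl
  have e2 : ((2 : Fin 3).succ) = (3 : Fin 4) := rfl
  have hr2 : rad z ^ 2 = z 1 ^ 2 + z 2 ^ 2 + z 3 ^ 2 := by
    rw [rad, Real.sq_sqrt (by positivity), Fin.sum_univ_three, e0, e1, e2]
  have hrdr : rad z * dr U z =
      z 1 * pd 1 U z + z 2 * pd 2 U z + z 3 * pd 3 U z := by
    rw [dr, Fin.sum_univ_three, e0, e1, e2]
    field_simp
  rw [lap, box, lap]
  simp only [Fin.sum_univ_three, e0, e1, e2, hpdpd, hboost, hrdr]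
  simp only [Pi.single_apply, Fin.ext_iff]
  norm_num
  rw [hsym (Pi.single 1 1) (Pi.single 0 1), hsym (Pi.single 2 1) (Pi.single 0 1),
    hsym (Pi.single 3 1) (Pi.single 0 1)]
  rw [hr2]
  ring
end

section
/- Suppose u = u(t,x) is a C² function on (0,∞) × ℝ³. Then for all t > 0 and x ≠ 0 with r = |x|: ⟨t−r⟩ (|∂_{tt}u| + |∇∂_t u| + |∇² u|) ≲ |∂Γ^{≤1} u| + ⟨t+r⟩ |□u|, where ∂ ranges over (∂_t, ∂_1, ∂_2, ∂_3), Γ^{≤1} denotes all products of at most one vector field among ∂_t, ∂_i, Ω_{i0} = t∂_i + x_i∂_t, Ω_{ij} = x_i∂_j − x_j∂_i, and |∂Γ^{≤1}u| is the Euclidean norm of all first derivatives of all Γ^{≤1}u. -/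
open Real MeasureTheory

section SDDhelpers

theorem sdd_abs_sub (a b : ℝ) : |a - b| ≤ |a| + |b| := by
  simpa [sub_eq_add_neg] using (abs_add_le a (-b)).trans (by rw [abs_neg])

theorem sdd_abs3 (a b c : ℝ) : |a + b + c| ≤ |a| + |b| + |c| :=
  (abs_add_le _ _).trans (by linarith [abs_add_le a b])

theorem sdd_mulb {c Y C B : ℝ} (hc : |c| ≤ C) (hY : |Y| ≤ B) : |c*Y| ≤ C*B := by
  rw [abs_mul]; exact mul_le_mul hc hY (abs_nonneg _) ((abs_nonneg c).trans hc)

theorem sdd_sub {X Y E A B : ℝ} (he : E = X - Y) (hX : |X| ≤ A) (hY : |Y| ≤ B) :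
    |E| ≤ A + B := by rw [he]; exact (sdd_abs_sub X Y).trans (add_le_add hX hY)

theorem sdd_add {X Y E A B : ℝ} (he : E = X + Y) (hX : |X| ≤ A) (hY : |Y| ≤ B) :
    |E| ≤ A + B := by rw [he]; exact (abs_add_le X Y).trans (add_le_add hX hY)

theorem sdd_step3 {X Y Z E A B C : ℝ} (he : E = X - Y + Z)
    (hX : |X| ≤ A) (hY : |Y| ≤ B) (hZ : |Z| ≤ C) : |E| ≤ A + B + C := by
  rw [he]
  calc |X - Y + Z| ≤ |X - Y| + |Z| := abs_add_le _ _
    _ ≤ (|X| + |Y|) + |Z| := by linarith [sdd_abs_sub X Y]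
    _ ≤ A + B + C := by linarith

theorem sdd_comb3 {x1 x2 x3 r e1 e2 e3 B : ℝ} (h1 : |e1| ≤ B) (h2 : |e2| ≤ B) (h3 : |e3| ≤ B)
    (hx1 : |x1| ≤ r) (hx2 : |x2| ≤ r) (hx3 : |x3| ≤ r) :
    |x1*e1 + x2*e2 + x3*e3| ≤ 3*(r*B) := by
  have t1 := sdd_mulb hx1 h1
  have t2 := sdd_mulb hx2 h2
  have t3 := sdd_mulb hx3 h3
  have := sdd_abs3 (x1*e1) (x2*e2) (x3*e3)
  linarith

theorem sdd_comb2 {x1 x2 r e1 e2 B : ℝ} (h1 : |e1| ≤ B) (h2 : |e2| ≤ B)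
    (hx1 : |x1| ≤ r) (hx2 : |x2| ≤ r) :
    |x1*e1 + x2*e2| ≤ 2*(r*B) := by
  have t1 := sdd_mulb hx1 h1
  have t2 := sdd_mulb hx2 h2
  have := abs_add_le (x1*e1) (x2*e2)
  linarith

theorem sdd_cancel {c A B : ℝ} (hc : 0 < c) (h : c*A ≤ c*B) : A ≤ B :=
  le_of_mul_le_mul_left h hc

theorem sdd_peel {t a x b B r : ℝ} (ht : 0 ≤ t) (h : |t*a + x*b| ≤ B) (hx : |x| ≤ r) :
    t*|a| ≤ B + r*|b| := by
  have h1 : |t*a| ≤ |t*a + x*b| + |x*b| := by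
    calc |t*a| = |(t*a + x*b) - x*b| := by congr 1; ring
      _ ≤ |t*a + x*b| + |x*b| := sdd_abs_sub _ _
  have h2 : |x*b| ≤ r*|b| := by
    rw [abs_mul]; exact mul_le_mul hx le_rfl (abs_nonneg b) ((abs_nonneg x).trans hx)
  rw [abs_mul, abs_of_nonneg ht] at h1
  linarith

end SDDhelpers


set_option maxHeartbeats 2000000 in
theorem sdd_core (t r x1 x2 x3 G F w00 w01 w02 w03 w11 w12 w13 w22 w23 w33 : ℝ)
    (ht : 0 < t) (hr : 0 < r) (hx : x1^2 + x2^2 + x3^2 = r^2) (hG : 0 ≤ G) (hw00 : |w00| ≤ G) (hw01 : |w01| ≤ G) (hw02 : |w02| ≤ G) (hw03 : |w03| ≤ G) (hw11 : |w11| ≤ G) (hw12 : |w12| ≤ G) (hw13 : |w13| ≤ G) (hw22 : |w22| ≤ G) (hw23 : |w23| ≤ G) (hw33 : |w33| ≤ G) (hB10 : |t*w01 + x1*w00| ≤ 3*G) (hB11 : |t*w11 + x1*w01| ≤ 3*G) (hB12 : |t*w12 + x1*w02| ≤ 3*G) (hB13 : |t*w13 + x1*w03| ≤ 3*G) (hB20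 : |t*w02 + x2*w00| ≤ 3*G) (hB21 : |t*w12 + x2*w01| ≤ 3*G) (hB22 : |t*w22 + x2*w02| ≤ 3*G) (hB23 : |t*w23 + x2*w03| ≤ 3*G) (hB30 : |t*w03 + x3*w00| ≤ 3*G) (hB31 : |t*w13 + x3*w01| ≤ 3*G) (hB32 : |t*w23 + x3*w02| ≤ 3*G) (hB33 : |t*w33 + x3*w03| ≤ 3*G) (hR120 : |x1*w02 - x2*w01| ≤ 3*G) (hR121 : |x1*w12 - x2*w11| ≤ 3*G) (hR122 : |x1*w22 - x2*w12| ≤ 3*G) (hR123 : |x1*w23 - x2*w13| ≤ 3*G) (hR130 : |x1*w03 - x3*w01| ≤ 3*G) (hR131 : |x1*w13 - x3*w11| ≤ 3*G) (hR132 : |x1*w23 - x3*w12| ≤ 3*G) (hR133 : |x1*w33 - x3*w13| ≤ 3*G) (hR230 : |x2*w03 - x3*w02| ≤ 3*G) (hR231 : |x2*w13 - x3*w12| ≤ 3*G) (hR232 : |x2*w23 - x3*w22| ≤ 3*G) (hR233 : |x2*w33 - x3*w23| ≤ 3*G) (htr : w00 - (w11 + w22 + w33) = F) :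
    (1 + |t - r|) * (|w00| + |w01| + |w02| + |w03| + |w11| + |w12| + |w13| + |w22| + |w23| + |w33|) ≤ 17920 * G + 60 * ((t + r) * |F|) := by
  have hF : (0:ℝ) ≤ |F| := abs_nonneg F
  have hr2pos : (0:ℝ) < r^2 := by positivity
  have hx1 : |x1| ≤ r := by
    have hsq : x1^2 ≤ r^2 := by linarith only [hx, sq_nonneg x2, sq_nonneg x3]
    have h := Real.sqrt_le_sqrt hsq
    rwa [Real.sqrt_sq_eq_abs, Real.sqrt_sq hr.le] at h
  have hx2 : |x2| ≤ r := by
    have hsq : x2^2 ≤ r^2 := by linarith only [hx, sq_nonneg x1, sq_nonneg x3]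
    have h := Real.sqrt_le_sqrt hsq
    rwa [Real.sqrt_sq_eq_abs, Real.sqrt_sq hr.le] at h
  have hx3 : |x3| ≤ r := by
    have hsq : x3^2 ≤ r^2 := by linarith only [hx, sq_nonneg x1, sq_nonneg x2]
    have h := Real.sqrt_le_sqrt hsq
    rwa [Real.sqrt_sq_eq_abs, Real.sqrt_sq hr.le] at h
  have habs_t : |t| ≤ t := le_of_eq (abs_of_pos ht)
  have habs_r2 : |r^2| ≤ r^2 := le_of_eq (abs_of_pos hr2pos)
  have hi0 : |t*(x1*w01 + x2*w02 + x3*w03) + r^2*w00| ≤ 9*(r*G) := by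
    have e : t*(x1*w01 + x2*w02 + x3*w03) + r^2*w00 = x1*(t*w01 + x1*w00) + x2*(t*w02 + x2*w00) + x3*(t*w03 + x3*w00) := by linear_combination (-w00) * hx
    rw [e]; exact (sdd_comb3 hB10 hB20 hB30 hx1 hx2 hx3).trans (le_of_eq (by ring))
  have hi1 : |t*(x1*w11 + x2*w12 + x3*w13) + r^2*w01| ≤ 9*(r*G) := by
    have e : t*(x1*w11 + x2*w12 + x3*w13) + r^2*w01 = x1*(t*w11 + x1*w01) + x2*(t*w12 + x2*w01) + x3*(t*w13 + x3*w01) := by linear_combination (-w01) * hx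
    rw [e]; exact (sdd_comb3 hB11 hB21 hB31 hx1 hx2 hx3).trans (le_of_eq (by ring))
  have hi2 : |t*(x1*w12 + x2*w22 + x3*w23) + r^2*w02| ≤ 9*(r*G) := by
    have e : t*(x1*w12 + x2*w22 + x3*w23) + r^2*w02 = x1*(t*w12 + x1*w02) + x2*(t*w22 + x2*w02) + x3*(t*w23 + x3*w02) := by linear_combination (-w02) * hx
    rw [e]; exact (sdd_comb3 hB12 hB22 hB32 hx1 hx2 hx3).trans (le_of_eq (by ring))
  have hi3 : |t*(x1*w13 + x2*w23 + x3*w33) + r^2*w03| ≤ 9*(r*G) := by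
    have e : t*(x1*w13 + x2*w23 + x3*w33) + r^2*w03 = x1*(t*w13 + x1*w03) + x2*(t*w23 + x2*w03) + x3*(t*w33 + x3*w03) := by linear_combination (-w03) * hx
    rw [e]; exact (sdd_comb3 hB13 hB23 hB33 hx1 hx2 hx3).trans (le_of_eq (by ring))
  have hA10 : |r^2*w01 - x1*(x1*w01 + x2*w02 + x3*w03)| ≤ 6*(r*G) := by
    have f0 : |x2*w01 - x1*w02| ≤ 3*G := by rw [abs_sub_comm]; exact hR120
    have f1 : |x3*w01 - x1*w03| ≤ 3*G := by rw [abs_sub_comm]; exact hR130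
    have e : r^2*w01 - x1*(x1*w01 + x2*w02 + x3*w03) = x2*(x2*w01 - x1*w02) + x3*(x3*w01 - x1*w03) := by linear_combination (-w01) * hx
    rw [e]; exact (sdd_comb2 f0 f1 hx2 hx3).trans (le_of_eq (by ring))
  have hA11 : |r^2*w11 - x1*(x1*w11 + x2*w12 + x3*w13)| ≤ 6*(r*G) := by
    have f0 : |x2*w11 - x1*w12| ≤ 3*G := by rw [abs_sub_comm]; exact hR121
    have f1 : |x3*w11 - x1*w13| ≤ 3*G := by rw [abs_sub_comm]; exact hR131
    have e : r^2*w11 - x1*(x1*w11 + x2*w12 + x3*w13) = x2*(x2*w11 - x1*w12) + x3*(x3*w11 - x1*w13) := by linear_combination (-w11) * hx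
    rw [e]; exact (sdd_comb2 f0 f1 hx2 hx3).trans (le_of_eq (by ring))
  have hA12 : |r^2*w12 - x1*(x1*w12 + x2*w22 + x3*w23)| ≤ 6*(r*G) := by
    have f0 : |x2*w12 - x1*w22| ≤ 3*G := by rw [abs_sub_comm]; exact hR122
    have f1 : |x3*w12 - x1*w23| ≤ 3*G := by rw [abs_sub_comm]; exact hR132
    have e : r^2*w12 - x1*(x1*w12 + x2*w22 + x3*w23) = x2*(x2*w12 - x1*w22) + x3*(x3*w12 - x1*w23) := by linear_combination (-w12) * hx
    rw [e]; exact (sdd_comb2 f0 f1 hx2 hx3).trans (le_of_eq (by ring))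
  have hA13 : |r^2*w13 - x1*(x1*w13 + x2*w23 + x3*w33)| ≤ 6*(r*G) := by
    have f0 : |x2*w13 - x1*w23| ≤ 3*G := by rw [abs_sub_comm]; exact hR123
    have f1 : |x3*w13 - x1*w33| ≤ 3*G := by rw [abs_sub_comm]; exact hR133
    have e : r^2*w13 - x1*(x1*w13 + x2*w23 + x3*w33) = x2*(x2*w13 - x1*w23) + x3*(x3*w13 - x1*w33) := by linear_combination (-w13) * hx
    rw [e]; exact (sdd_comb2 f0 f1 hx2 hx3).trans (le_of_eq (by ring))
  have hA20 : |r^2*w02 - x2*(x1*w01 + x2*w02 + x3*w03)| ≤ 6*(r*G) := by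
    have f0 : |x1*w02 - x2*w01| ≤ 3*G := hR120
    have f1 : |x3*w02 - x2*w03| ≤ 3*G := by rw [abs_sub_comm]; exact hR230
    have e : r^2*w02 - x2*(x1*w01 + x2*w02 + x3*w03) = x1*(x1*w02 - x2*w01) + x3*(x3*w02 - x2*w03) := by linear_combination (-w02) * hx
    rw [e]; exact (sdd_comb2 f0 f1 hx1 hx3).trans (le_of_eq (by ring))
  have hA21 : |r^2*w12 - x2*(x1*w11 + x2*w12 + x3*w13)| ≤ 6*(r*G) := by
    have f0 : |x1*w12 - x2*w11| ≤ 3*G := hR121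
    have f1 : |x3*w12 - x2*w13| ≤ 3*G := by rw [abs_sub_comm]; exact hR231
    have e : r^2*w12 - x2*(x1*w11 + x2*w12 + x3*w13) = x1*(x1*w12 - x2*w11) + x3*(x3*w12 - x2*w13) := by linear_combination (-w12) * hx
    rw [e]; exact (sdd_comb2 f0 f1 hx1 hx3).trans (le_of_eq (by ring))
  have hA22 : |r^2*w22 - x2*(x1*w12 + x2*w22 + x3*w23)| ≤ 6*(r*G) := by
    have f0 : |x1*w22 - x2*w12| ≤ 3*G := hR122
    have f1 : |x3*w22 - x2*w23| ≤ 3*G := by rw [abs_sub_comm]; exact hR232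
    have e : r^2*w22 - x2*(x1*w12 + x2*w22 + x3*w23) = x1*(x1*w22 - x2*w12) + x3*(x3*w22 - x2*w23) := by linear_combination (-w22) * hx
    rw [e]; exact (sdd_comb2 f0 f1 hx1 hx3).trans (le_of_eq (by ring))
  have hA23 : |r^2*w23 - x2*(x1*w13 + x2*w23 + x3*w33)| ≤ 6*(r*G) := by
    have f0 : |x1*w23 - x2*w13| ≤ 3*G := hR123
    have f1 : |x3*w23 - x2*w33| ≤ 3*G := by rw [abs_sub_comm]; exact hR233
    have e : r^2*w23 - x2*(x1*w13 + x2*w23 + x3*w33) = x1*(x1*w23 - x2*w13) + x3*(x3*w23 - x2*w33) := by linear_combination (-w23) * hx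
    rw [e]; exact (sdd_comb2 f0 f1 hx1 hx3).trans (le_of_eq (by ring))
  have hA30 : |r^2*w03 - x3*(x1*w01 + x2*w02 + x3*w03)| ≤ 6*(r*G) := by
    have f0 : |x1*w03 - x3*w01| ≤ 3*G := hR130
    have f1 : |x2*w03 - x3*w02| ≤ 3*G := hR230
    have e : r^2*w03 - x3*(x1*w01 + x2*w02 + x3*w03) = x1*(x1*w03 - x3*w01) + x2*(x2*w03 - x3*w02) := by linear_combination (-w03) * hx
    rw [e]; exact (sdd_comb2 f0 f1 hx1 hx2).trans (le_of_eq (by ring))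
  have hA31 : |r^2*w13 - x3*(x1*w11 + x2*w12 + x3*w13)| ≤ 6*(r*G) := by
    have f0 : |x1*w13 - x3*w11| ≤ 3*G := hR131
    have f1 : |x2*w13 - x3*w12| ≤ 3*G := hR231
    have e : r^2*w13 - x3*(x1*w11 + x2*w12 + x3*w13) = x1*(x1*w13 - x3*w11) + x2*(x2*w13 - x3*w12) := by linear_combination (-w13) * hx
    rw [e]; exact (sdd_comb2 f0 f1 hx1 hx2).trans (le_of_eq (by ring))
  have hA32 : |r^2*w23 - x3*(x1*w12 + x2*w22 + x3*w23)| ≤ 6*(r*G) := by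
    have f0 : |x1*w23 - x3*w12| ≤ 3*G := hR132
    have f1 : |x2*w23 - x3*w22| ≤ 3*G := hR232
    have e : r^2*w23 - x3*(x1*w12 + x2*w22 + x3*w23) = x1*(x1*w23 - x3*w12) + x2*(x2*w23 - x3*w22) := by linear_combination (-w23) * hx
    rw [e]; exact (sdd_comb2 f0 f1 hx1 hx2).trans (le_of_eq (by ring))
  have hA33 : |r^2*w33 - x3*(x1*w13 + x2*w23 + x3*w33)| ≤ 6*(r*G) := by
    have f0 : |x1*w33 - x3*w13| ≤ 3*G := hR133
    have f1 : |x2*w33 - x3*w23| ≤ 3*G := hR233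
    have e : r^2*w33 - x3*(x1*w13 + x2*w23 + x3*w33) = x1*(x1*w33 - x3*w13) + x2*(x2*w33 - x3*w23) := by linear_combination (-w33) * hx
    rw [e]; exact (sdd_comb2 f0 f1 hx1 hx2).trans (le_of_eq (by ring))
  have hiv : |r^2*w00 - r^2*F - (x1*(x1*w11 + x2*w12 + x3*w13) + x2*(x1*w12 + x2*w22 + x3*w23) + x3*(x1*w13 + x2*w23 + x3*w33))| ≤ 18*(r*G) := by
    have e : r^2*w00 - r^2*F - (x1*(x1*w11 + x2*w12 + x3*w13) + x2*(x1*w12 + x2*w22 + x3*w23) + x3*(x1*w13 + x2*w23 + x3*w33)) = (r^2*w11 - x1*(x1*w11 + x2*w12 + x3*w13)) + (r^2*w22 - x2*(x1*w12 + x2*w22 + x3*w23)) + (r^2*w33 - x3*(x1*w13 + x2*w23 + x3*w33)) := by linear_combination (r^2) * htr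
    rw [e]; exact (sdd_abs3 _ _ _).trans (by linarith only [hA11, hA22, hA33])
  have hvi : |t*(x1*(x1*w11 + x2*w12 + x3*w13) + x2*(x1*w12 + x2*w22 + x3*w23) + x3*(x1*w13 + x2*w23 + x3*w33)) + r^2*(x1*w01 + x2*w02 + x3*w03)| ≤ 27*(r^2*G) := by
    have e : t*(x1*(x1*w11 + x2*w12 + x3*w13) + x2*(x1*w12 + x2*w22 + x3*w23) + x3*(x1*w13 + x2*w23 + x3*w33)) + r^2*(x1*w01 + x2*w02 + x3*w03) = x1*(t*(x1*w11 + x2*w12 + x3*w13) + r^2*w01) + x2*(t*(x1*w12 + x2*w22 + x3*w23) + r^2*w02) + x3*(t*(x1*w13 + x2*w23 + x3*w33) + r^2*w03) := by ring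
    rw [e]; exact (sdd_comb3 hi1 hi2 hi3 hx1 hx2 hx3).trans (le_of_eq (by ring))
  have hvii : |t*(x1*w01 + x2*w02 + x3*w03) + (x1*(x1*w11 + x2*w12 + x3*w13) + x2*(x1*w12 + x2*w22 + x3*w23) + x3*(x1*w13 + x2*w23 + x3*w33)) + r^2*F| ≤ 27*(r*G) := by
    have e : t*(x1*w01 + x2*w02 + x3*w03) + (x1*(x1*w11 + x2*w12 + x3*w13) + x2*(x1*w12 + x2*w22 + x3*w23) + x3*(x1*w13 + x2*w23 + x3*w33)) + r^2*F = (t*(x1*w01 + x2*w02 + x3*w03) + r^2*w00) - (r^2*w00 - r^2*F - (x1*(x1*w11 + x2*w12 + x3*w13) + x2*(x1*w12 + x2*w22 + x3*w23) + x3*(x1*w13 + x2*w23 + x3*w33))) := by ring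
    exact (sdd_sub e hi0 hiv).trans (le_of_eq (by ring))
  have hAp : |(t^2 - r^2)*(x1*w01 + x2*w02 + x3*w03) + t*(r^2*F)| ≤ t*(27*(r*G)) + 27*(r^2*G) := by
    have e : (t^2 - r^2)*(x1*w01 + x2*w02 + x3*w03) + t*(r^2*F) = t*(t*(x1*w01 + x2*w02 + x3*w03) + (x1*(x1*w11 + x2*w12 + x3*w13) + x2*(x1*w12 + x2*w22 + x3*w23) + x3*(x1*w13 + x2*w23 + x3*w33)) + r^2*F) - (t*(x1*(x1*w11 + x2*w12 + x3*w13) + x2*(x1*w12 + x2*w22 + x3*w23) + x3*(x1*w13 + x2*w23 + x3*w33)) + r^2*(x1*w01 + x2*w02 + x3*w03)) := by ring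
    exact sdd_sub e (sdd_mulb habs_t hvii) hvi
  have habsr2F : |r^2*F| ≤ r^2*|F| := le_of_eq (by rw [abs_mul, abs_of_pos hr2pos])
  have hP0 : |(t - r)*(x1*w01 + x2*w02 + x3*w03)| ≤ 27*(r*G) + r^2*|F| := by
    have e : (t + r)*((t - r)*(x1*w01 + x2*w02 + x3*w03)) = ((t^2 - r^2)*(x1*w01 + x2*w02 + x3*w03) + t*(r^2*F)) - t*(r^2*F) := by ring
    have h3 := sdd_sub e hAp (sdd_mulb habs_t habsr2F)
    have h4 : |(t + r)*((t - r)*(x1*w01 + x2*w02 + x3*w03))| ≤ (t + r)*(27*(r*G) + r^2*|F|) := by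
      refine h3.trans ?_
      linarith only [mul_nonneg (mul_nonneg (mul_nonneg hr.le hr.le) hr.le) hF]
    rw [abs_mul, abs_of_pos (by linarith : (0:ℝ) < t + r)] at h4
    exact sdd_cancel (by linarith) h4
  have hQb : |(t - r)*(x1*(x1*w11 + x2*w12 + x3*w13) + x2*(x1*w12 + x2*w22 + x3*w23) + x3*(x1*w13 + x2*w23 + x3*w33))| ≤ 27*(r^2*G) + r^3*|F| := by
    have e : (t + r)*((t - r)*(x1*(x1*w11 + x2*w12 + x3*w13) + x2*(x1*w12 + x2*w22 + x3*w23) + x3*(x1*w13 + x2*w23 + x3*w33))) = (t*(t*(x1*(x1*w11 + x2*w12 + x3*w13) + x2*(x1*w12 + x2*w22 + x3*w23) + x3*(x1*w13 + x2*w23 + x3*w33)) + r^2*(x1*w01 + x2*w02 + x3*w03)) - r^2*(t*(x1*w01 + x2*w02 + x3*w03) + (x1*(x1*w11 + x2*w12 + x3*w13) + x2*(x1*w12 + x2*w22 + x3*w23) + x3*(x1*w13 + x2*w23 + x3*w33)) + r^2*F)) + r^2*(r^2*F) := by ring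
    have h3 := sdd_step3 e (sdd_mulb habs_t hvi) (sdd_mulb habs_r2 hvii) (sdd_mulb habs_r2 habsr2F)
    have h4 : |(t + r)*((t - r)*(x1*(x1*w11 + x2*w12 + x3*w13) + x2*(x1*w12 + x2*w22 + x3*w23) + x3*(x1*w13 + x2*w23 + x3*w33)))| ≤ (t + r)*(27*(r^2*G) + r^3*|F|) := by
      refine h3.trans ?_
      linarith only [mul_nonneg (mul_nonneg ht.le (mul_nonneg (mul_nonneg hr.le hr.le) hr.le)) hF]
    rw [abs_mul, abs_of_pos (by linarith : (0:ℝ) < t + r)] at h4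
    exact sdd_cancel (by linarith) h4
  have hg12 : |x2*(x1*w11 + x2*w12 + x3*w13) - x1*(x1*w12 + x2*w22 + x3*w23)| ≤ 12*(r*G) := by
    have e : x2*(x1*w11 + x2*w12 + x3*w13) - x1*(x1*w12 + x2*w22 + x3*w23) = (r^2*w12 - x1*(x1*w12 + x2*w22 + x3*w23)) - (r^2*w12 - x2*(x1*w11 + x2*w12 + x3*w13)) := by ring
    exact (sdd_sub e hA12 hA21).trans (le_of_eq (by ring))
  have hg13 : |x3*(x1*w11 + x2*w12 + x3*w13) - x1*(x1*w13 + x2*w23 + x3*w33)| ≤ 12*(r*G) := by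
    have e : x3*(x1*w11 + x2*w12 + x3*w13) - x1*(x1*w13 + x2*w23 + x3*w33) = (r^2*w13 - x1*(x1*w13 + x2*w23 + x3*w33)) - (r^2*w13 - x3*(x1*w11 + x2*w12 + x3*w13)) := by ring
    exact (sdd_sub e hA13 hA31).trans (le_of_eq (by ring))
  have hg23 : |x3*(x1*w12 + x2*w22 + x3*w23) - x2*(x1*w13 + x2*w23 + x3*w33)| ≤ 12*(r*G) := by
    have e : x3*(x1*w12 + x2*w22 + x3*w23) - x2*(x1*w13 + x2*w23 + x3*w33) = (r^2*w23 - x2*(x1*w13 + x2*w23 + x3*w33)) - (r^2*w23 - x3*(x1*w12 + x2*w22 + x3*w23)) := by ring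
    exact (sdd_sub e hA23 hA32).trans (le_of_eq (by ring))
  have hb1 : |r^2*(x1*w11 + x2*w12 + x3*w13) - x1*(x1*(x1*w11 + x2*w12 + x3*w13) + x2*(x1*w12 + x2*w22 + x3*w23) + x3*(x1*w13 + x2*w23 + x3*w33))| ≤ 24*(r^2*G) := by
    have e : r^2*(x1*w11 + x2*w12 + x3*w13) - x1*(x1*(x1*w11 + x2*w12 + x3*w13) + x2*(x1*w12 + x2*w22 + x3*w23) + x3*(x1*w13 + x2*w23 + x3*w33)) = x2*(x2*(x1*w11 + x2*w12 + x3*w13) - x1*(x1*w12 + x2*w22 + x3*w23)) + x3*(x3*(x1*w11 + x2*w12 + x3*w13) - x1*(x1*w13 + x2*w23 + x3*w33)) := by linear_combination (-(x1*w11 + x2*w12 + x3*w13)) * hx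
    rw [e]; exact (sdd_comb2 hg12 hg13 hx2 hx3).trans (le_of_eq (by ring))
  have hb2 : |r^2*(x1*w12 + x2*w22 + x3*w23) - x2*(x1*(x1*w11 + x2*w12 + x3*w13) + x2*(x1*w12 + x2*w22 + x3*w23) + x3*(x1*w13 + x2*w23 + x3*w33))| ≤ 24*(r^2*G) := by
    have f0 : |x1*(x1*w12 + x2*w22 + x3*w23) - x2*(x1*w11 + x2*w12 + x3*w13)| ≤ 12*(r*G) := by rw [abs_sub_comm]; exact hg12
    have e : r^2*(x1*w12 + x2*w22 + x3*w23) - x2*(x1*(x1*w11 + x2*w12 + x3*w13) + x2*(x1*w12 + x2*w22 + x3*w23) + x3*(x1*w13 + x2*w23 + x3*w33)) = x1*(x1*(x1*w12 + x2*w22 + x3*w23) - x2*(x1*w11 + x2*w12 + x3*w13)) + x3*(x3*(x1*w12 + x2*w22 + x3*w23) - x2*(x1*w13 + x2*w23 + x3*w33)) := by linear_combination (-(x1*w12 + x2*w22 + x3*w23)) * hx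
    rw [e]; exact (sdd_comb2 f0 hg23 hx1 hx3).trans (le_of_eq (by ring))
  have hb3 : |r^2*(x1*w13 + x2*w23 + x3*w33) - x3*(x1*(x1*w11 + x2*w12 + x3*w13) + x2*(x1*w12 + x2*w22 + x3*w23) + x3*(x1*w13 + x2*w23 + x3*w33))| ≤ 24*(r^2*G) := by
    have f0 : |x1*(x1*w13 + x2*w23 + x3*w33) - x3*(x1*w11 + x2*w12 + x3*w13)| ≤ 12*(r*G) := by rw [abs_sub_comm]; exact hg13
    have f1 : |x2*(x1*w13 + x2*w23 + x3*w33) - x3*(x1*w12 + x2*w22 + x3*w23)| ≤ 12*(r*G) := by rw [abs_sub_comm]; exact hg23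
    have e : r^2*(x1*w13 + x2*w23 + x3*w33) - x3*(x1*(x1*w11 + x2*w12 + x3*w13) + x2*(x1*w12 + x2*w22 + x3*w23) + x3*(x1*w13 + x2*w23 + x3*w33)) = x1*(x1*(x1*w13 + x2*w23 + x3*w33) - x3*(x1*w11 + x2*w12 + x3*w13)) + x2*(x2*(x1*w13 + x2*w23 + x3*w33) - x3*(x1*w12 + x2*w22 + x3*w23)) := by linear_combination (-(x1*w13 + x2*w23 + x3*w33)) * hx
    rw [e]; exact (sdd_comb2 f0 f1 hx1 hx2).trans (le_of_eq (by ring))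
  rcases le_or_gt t (6*r) with h6 | h6'
  · have htr7 : |t - r| ≤ 7*r := by rw [abs_le]; constructor <;> linarith
    have habs_t6 : |t| ≤ 6*r := by rw [abs_of_pos ht]; linarith
    have hPj1 : |(t - r)*(x1*w11 + x2*w12 + x3*w13)| ≤ 195*(r*G) + r^2*|F| := by
      have e : r^2*((t - r)*(x1*w11 + x2*w12 + x3*w13)) = (t - r)*(r^2*(x1*w11 + x2*w12 + x3*w13) - x1*(x1*(x1*w11 + x2*w12 + x3*w13) + x2*(x1*w12 + x2*w22 + x3*w23) + x3*(x1*w13 + x2*w23 + x3*w33))) + x1*((t - r)*(x1*(x1*w11 + x2*w12 + x3*w13) + x2*(x1*w12 + x2*w22 + x3*w23) + x3*(x1*w13 + x2*w23 + x3*w33))) := by ring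
      have h1 := sdd_add e (sdd_mulb htr7 hb1) (sdd_mulb hx1 hQb)
      have h1' : |r^2*((t - r)*(x1*w11 + x2*w12 + x3*w13))| ≤ r^2*(195*(r*G) + r^2*|F|) := h1.trans (le_of_eq (by ring))
      rw [abs_mul, abs_of_pos hr2pos] at h1'
      exact sdd_cancel hr2pos h1'
    have hPj2 : |(t - r)*(x1*w12 + x2*w22 + x3*w23)| ≤ 195*(r*G) + r^2*|F| := by
      have e : r^2*((t - r)*(x1*w12 + x2*w22 + x3*w23)) = (t - r)*(r^2*(x1*w12 + x2*w22 + x3*w23) - x2*(x1*(x1*w11 + x2*w12 + x3*w13) + x2*(x1*w12 + x2*w22 + x3*w23) + x3*(x1*w13 + x2*w23 + x3*w33))) + x2*((t - r)*(x1*(x1*w11 + x2*w12 + x3*w13) + x2*(x1*w12 + x2*w22 + x3*w23) + x3*(x1*w13 + x2*w23 + x3*w33))) := by ring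
      have h1 := sdd_add e (sdd_mulb htr7 hb2) (sdd_mulb hx2 hQb)
      have h1' : |r^2*((t - r)*(x1*w12 + x2*w22 + x3*w23))| ≤ r^2*(195*(r*G) + r^2*|F|) := h1.trans (le_of_eq (by ring))
      rw [abs_mul, abs_of_pos hr2pos] at h1'
      exact sdd_cancel hr2pos h1'
    have hPj3 : |(t - r)*(x1*w13 + x2*w23 + x3*w33)| ≤ 195*(r*G) + r^2*|F| := by
      have e : r^2*((t - r)*(x1*w13 + x2*w23 + x3*w33)) = (t - r)*(r^2*(x1*w13 + x2*w23 + x3*w33) - x3*(x1*(x1*w11 + x2*w12 + x3*w13) + x2*(x1*w12 + x2*w22 + x3*w23) + x3*(x1*w13 + x2*w23 + x3*w33))) + x3*((t - r)*(x1*(x1*w11 + x2*w12 + x3*w13) + x2*(x1*w12 + x2*w22 + x3*w23) + x3*(x1*w13 + x2*w23 + x3*w33))) := by ring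
      have h1 := sdd_add e (sdd_mulb htr7 hb3) (sdd_mulb hx3 hQb)
      have h1' : |r^2*((t - r)*(x1*w13 + x2*w23 + x3*w33))| ≤ r^2*(195*(r*G) + r^2*|F|) := h1.trans (le_of_eq (by ring))
      rw [abs_mul, abs_of_pos hr2pos] at h1'
      exact sdd_cancel hr2pos h1'
    have hPj0 : |(t - r)*(x1*w01 + x2*w02 + x3*w03)| ≤ 195*(r*G) + r^2*|F| := hP0.trans (by linarith only [mul_nonneg hr.le hG])
    have m00 : |t - r| * |w00| ≤ 1233*G + 6*(r*|F|) := by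
      have e : r^2*((t - r)*w00) = (t - r)*(t*(x1*w01 + x2*w02 + x3*w03) + r^2*w00) - t*((t - r)*(x1*w01 + x2*w02 + x3*w03)) := by ring
      have h1 := sdd_sub e (sdd_mulb htr7 hi0) (sdd_mulb habs_t6 hPj0)
      have h1' : |r^2*((t - r)*w00)| ≤ r^2*(1233*G + 6*(r*|F|)) := h1.trans (le_of_eq (by ring))
      have e2 : |r^2*((t - r)*w00)| = r^2*(|t - r| * |w00|) := by rw [abs_mul, abs_mul, abs_of_pos hr2pos]
      rw [e2] at h1'
      exact sdd_cancel hr2pos h1'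
    have m01 : |t - r| * |w01| ≤ 1233*G + 6*(r*|F|) := by
      have e : r^2*((t - r)*w01) = (t - r)*(t*(x1*w11 + x2*w12 + x3*w13) + r^2*w01) - t*((t - r)*(x1*w11 + x2*w12 + x3*w13)) := by ring
      have h1 := sdd_sub e (sdd_mulb htr7 hi1) (sdd_mulb habs_t6 hPj1)
      have h1' : |r^2*((t - r)*w01)| ≤ r^2*(1233*G + 6*(r*|F|)) := h1.trans (le_of_eq (by ring))
      have e2 : |r^2*((t - r)*w01)| = r^2*(|t - r| * |w01|) := by rw [abs_mul, abs_mul, abs_of_pos hr2pos]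
      rw [e2] at h1'
      exact sdd_cancel hr2pos h1'
    have m02 : |t - r| * |w02| ≤ 1233*G + 6*(r*|F|) := by
      have e : r^2*((t - r)*w02) = (t - r)*(t*(x1*w12 + x2*w22 + x3*w23) + r^2*w02) - t*((t - r)*(x1*w12 + x2*w22 + x3*w23)) := by ring
      have h1 := sdd_sub e (sdd_mulb htr7 hi2) (sdd_mulb habs_t6 hPj2)
      have h1' : |r^2*((t - r)*w02)| ≤ r^2*(1233*G + 6*(r*|F|)) := h1.trans (le_of_eq (by ring))
      have e2 : |r^2*((t - r)*w02)| = r^2*(|t - r| * |w02|) := by rw [abs_mul, abs_mul, abs_of_pos hr2pos]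
      rw [e2] at h1'
      exact sdd_cancel hr2pos h1'
    have m03 : |t - r| * |w03| ≤ 1233*G + 6*(r*|F|) := by
      have e : r^2*((t - r)*w03) = (t - r)*(t*(x1*w13 + x2*w23 + x3*w33) + r^2*w03) - t*((t - r)*(x1*w13 + x2*w23 + x3*w33)) := by ring
      have h1 := sdd_sub e (sdd_mulb htr7 hi3) (sdd_mulb habs_t6 hPj3)
      have h1' : |r^2*((t - r)*w03)| ≤ r^2*(1233*G + 6*(r*|F|)) := h1.trans (le_of_eq (by ring))
      have e2 : |r^2*((t - r)*w03)| = r^2*(|t - r| * |w03|) := by rw [abs_mul, abs_mul, abs_of_pos hr2pos]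
      rw [e2] at h1'
      exact sdd_cancel hr2pos h1'
    have m11 : |t - r| * |w11| ≤ 1233*G + 6*(r*|F|) := by
      have e : r^2*((t - r)*w11) = (t - r)*(r^2*w11 - x1*(x1*w11 + x2*w12 + x3*w13)) + x1*((t - r)*(x1*w11 + x2*w12 + x3*w13)) := by ring
      have h1 := sdd_add e (sdd_mulb htr7 hA11) (sdd_mulb hx1 hPj1)
      have h1' : |r^2*((t - r)*w11)| ≤ r^2*(1233*G + 6*(r*|F|)) := by
        refine h1.trans ?_
        linarith only [mul_nonneg (mul_nonneg hr.le hr.le) hG, mul_nonneg (mul_nonneg (mul_nonneg hr.le hr.le) hr.le) hF]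
      have e2 : |r^2*((t - r)*w11)| = r^2*(|t - r| * |w11|) := by rw [abs_mul, abs_mul, abs_of_pos hr2pos]
      rw [e2] at h1'
      exact sdd_cancel hr2pos h1'
    have m12 : |t - r| * |w12| ≤ 1233*G + 6*(r*|F|) := by
      have e : r^2*((t - r)*w12) = (t - r)*(r^2*w12 - x1*(x1*w12 + x2*w22 + x3*w23)) + x1*((t - r)*(x1*w12 + x2*w22 + x3*w23)) := by ring
      have h1 := sdd_add e (sdd_mulb htr7 hA12) (sdd_mulb hx1 hPj2)
      have h1' : |r^2*((t - r)*w12)| ≤ r^2*(1233*G + 6*(r*|F|)) := by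
        refine h1.trans ?_
        linarith only [mul_nonneg (mul_nonneg hr.le hr.le) hG, mul_nonneg (mul_nonneg (mul_nonneg hr.le hr.le) hr.le) hF]
      have e2 : |r^2*((t - r)*w12)| = r^2*(|t - r| * |w12|) := by rw [abs_mul, abs_mul, abs_of_pos hr2pos]
      rw [e2] at h1'
      exact sdd_cancel hr2pos h1'
    have m13 : |t - r| * |w13| ≤ 1233*G + 6*(r*|F|) := by
      have e : r^2*((t - r)*w13) = (t - r)*(r^2*w13 - x1*(x1*w13 + x2*w23 + x3*w33)) + x1*((t - r)*(x1*w13 + x2*w23 + x3*w33)) := by ring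
      have h1 := sdd_add e (sdd_mulb htr7 hA13) (sdd_mulb hx1 hPj3)
      have h1' : |r^2*((t - r)*w13)| ≤ r^2*(1233*G + 6*(r*|F|)) := by
        refine h1.trans ?_
        linarith only [mul_nonneg (mul_nonneg hr.le hr.le) hG, mul_nonneg (mul_nonneg (mul_nonneg hr.le hr.le) hr.le) hF]
      have e2 : |r^2*((t - r)*w13)| = r^2*(|t - r| * |w13|) := by rw [abs_mul, abs_mul, abs_of_pos hr2pos]
      rw [e2] at h1'
      exact sdd_cancel hr2pos h1'
    have m22 : |t - r| * |w22| ≤ 1233*G + 6*(r*|F|) := by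
      have e : r^2*((t - r)*w22) = (t - r)*(r^2*w22 - x2*(x1*w12 + x2*w22 + x3*w23)) + x2*((t - r)*(x1*w12 + x2*w22 + x3*w23)) := by ring
      have h1 := sdd_add e (sdd_mulb htr7 hA22) (sdd_mulb hx2 hPj2)
      have h1' : |r^2*((t - r)*w22)| ≤ r^2*(1233*G + 6*(r*|F|)) := by
        refine h1.trans ?_
        linarith only [mul_nonneg (mul_nonneg hr.le hr.le) hG, mul_nonneg (mul_nonneg (mul_nonneg hr.le hr.le) hr.le) hF]
      have e2 : |r^2*((t - r)*w22)| = r^2*(|t - r| * |w22|) := by rw [abs_mul, abs_mul, abs_of_pos hr2pos]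
      rw [e2] at h1'
      exact sdd_cancel hr2pos h1'
    have m23 : |t - r| * |w23| ≤ 1233*G + 6*(r*|F|) := by
      have e : r^2*((t - r)*w23) = (t - r)*(r^2*w23 - x2*(x1*w13 + x2*w23 + x3*w33)) + x2*((t - r)*(x1*w13 + x2*w23 + x3*w33)) := by ring
      have h1 := sdd_add e (sdd_mulb htr7 hA23) (sdd_mulb hx2 hPj3)
      have h1' : |r^2*((t - r)*w23)| ≤ r^2*(1233*G + 6*(r*|F|)) := by
        refine h1.trans ?_
        linarith only [mul_nonneg (mul_nonneg hr.le hr.le) hG, mul_nonneg (mul_nonneg (mul_nonneg hr.le hr.le) hr.le) hF]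
      have e2 : |r^2*((t - r)*w23)| = r^2*(|t - r| * |w23|) := by rw [abs_mul, abs_mul, abs_of_pos hr2pos]
      rw [e2] at h1'
      exact sdd_cancel hr2pos h1'
    have m33 : |t - r| * |w33| ≤ 1233*G + 6*(r*|F|) := by
      have e : r^2*((t - r)*w33) = (t - r)*(r^2*w33 - x3*(x1*w13 + x2*w23 + x3*w33)) + x3*((t - r)*(x1*w13 + x2*w23 + x3*w33)) := by ring
      have h1 := sdd_add e (sdd_mulb htr7 hA33) (sdd_mulb hx3 hPj3)
      have h1' : |r^2*((t - r)*w33)| ≤ r^2*(1233*G + 6*(r*|F|)) := by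
        refine h1.trans ?_
        linarith only [mul_nonneg (mul_nonneg hr.le hr.le) hG, mul_nonneg (mul_nonneg (mul_nonneg hr.le hr.le) hr.le) hF]
      have e2 : |r^2*((t - r)*w33)| = r^2*(|t - r| * |w33|) := by rw [abs_mul, abs_mul, abs_of_pos hr2pos]
      rw [e2] at h1'
      exact sdd_cancel hr2pos h1'
    have expand : (1 + |t - r|) * (|w00| + |w01| + |w02| + |w03| + |w11| + |w12| + |w13| + |w22| + |w23| + |w33|) = (|w00| + |w01| + |w02| + |w03| + |w11| + |w12| + |w13| + |w22| + |w23| + |w33|) + (|t - r| * |w00| + |t - r| * |w01| + |t - r| * |w02| + |t - r| * |w03| + |t - r| * |w11| + |t - r| * |w12| + |t - r| * |w13| + |t - r| * |w22| + |t - r| * |w23| + |t - r| * |w33|) := by ring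
    rw [expand]
    have hexp : (t + r) * |F| = t*|F| + r*|F| := by ring
    rw [hexp]
    linarith only [hG, m00, m01, m02, m03, m11, m12, m13, m22, m23, m33, hw00, hw01, hw02, hw03, hw11, hw12, hw13, hw22, hw23, hw33, mul_nonneg ht.le hF, mul_nonneg hr.le hF]
  · have h6 : 6*r ≤ t := h6'.le
    have hp01 : t*|w01| ≤ 3*G + r*|w00| := sdd_peel ht.le hB10 hx1
    have hp02 : t*|w02| ≤ 3*G + r*|w00| := sdd_peel ht.le hB20 hx2
    have hp03 : t*|w03| ≤ 3*G + r*|w00| := sdd_peel ht.le hB30 hx3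
    have hp11 : t*|w11| ≤ 3*G + r*|w01| := sdd_peel ht.le hB11 hx1
    have hp22 : t*|w22| ≤ 3*G + r*|w02| := sdd_peel ht.le hB22 hx2
    have hp33 : t*|w33| ≤ 3*G + r*|w03| := sdd_peel ht.le hB33 hx3
    have hp12 : t*|w12| ≤ 3*G + r*|w02| := sdd_peel ht.le hB12 hx1
    have hp13 : t*|w13| ≤ 3*G + r*|w03| := sdd_peel ht.le hB13 hx1
    have hp23 : t*|w23| ≤ 3*G + r*|w03| := sdd_peel ht.le hB23 hx2
    have hd0 : |w00| ≤ |F| + (|w11| + |w22| + |w33|) := by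
      have e : w00 = F + (w11 + w22 + w33) := by linarith
      rw [e]; exact (abs_add_le _ _).trans (by linarith only [sdd_abs3 w11 w22 w33])
    have q1 : t*(t*|w11|) ≤ t*(3*G + r*|w01|) := mul_le_mul_of_nonneg_left hp11 ht.le
    have q2 : t*(t*|w22|) ≤ t*(3*G + r*|w02|) := mul_le_mul_of_nonneg_left hp22 ht.le
    have q3 : t*(t*|w33|) ≤ t*(3*G + r*|w03|) := mul_le_mul_of_nonneg_left hp33 ht.le
    have s1 : r*(t*|w01|) ≤ r*(3*G + r*|w00|) := mul_le_mul_of_nonneg_left hp01 hr.le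
    have s2 : r*(t*|w02|) ≤ r*(3*G + r*|w00|) := mul_le_mul_of_nonneg_left hp02 hr.le
    have s3 : r*(t*|w03|) ≤ r*(3*G + r*|w00|) := mul_le_mul_of_nonneg_left hp03 hr.le
    have d2 : t*(t*|w00|) ≤ t*(t*(|F| + (|w11| + |w22| + |w33|))) :=
      mul_le_mul_of_nonneg_left (mul_le_mul_of_nonneg_left hd0 ht.le) ht.le
    have hsq : 36*(r*r) ≤ t*t := by have := mul_le_mul h6 h6 (by positivity : (0:ℝ) ≤ 6*r) ht.le; linarith only [this]
    have key00 : t*(t*|w00|) ≤ t*(2*(t*|F|) + 12*G) := by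
      linarith only [d2, q1, q2, q3, s1, s2, s3, mul_le_mul_of_nonneg_right hsq (abs_nonneg w00),
        mul_le_mul_of_nonneg_right h6 hG, mul_nonneg (mul_nonneg ht.le ht.le) hF,
        mul_nonneg ht.le hG, abs_nonneg w00]
    have k00 : t*|w00| ≤ 2*(t*|F|) + 12*G := sdd_cancel ht key00
    have k01 : t*|w01| ≤ 5*G + t*|F| := by
      linarith only [hp01, mul_le_mul_of_nonneg_right h6 (abs_nonneg w00), k00, mul_nonneg ht.le hF, hG]
    have k02 : t*|w02| ≤ 5*G + t*|F| := by
      linarith only [hp02, mul_le_mul_of_nonneg_right h6 (abs_nonneg w00), k00, mul_nonneg ht.le hF, hG]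
    have k03 : t*|w03| ≤ 5*G + t*|F| := by
      linarith only [hp03, mul_le_mul_of_nonneg_right h6 (abs_nonneg w00), k00, mul_nonneg ht.le hF, hG]
    have k11 : t*|w11| ≤ 4*G + t*|F| := by
      linarith only [hp11, mul_le_mul_of_nonneg_right h6 (abs_nonneg w01), k01, mul_nonneg ht.le hF, hG]
    have k12 : t*|w12| ≤ 4*G + t*|F| := by
      linarith only [hp12, mul_le_mul_of_nonneg_right h6 (abs_nonneg w02), k02, mul_nonneg ht.le hF, hG]
    have k13 : t*|w13| ≤ 4*G + t*|F| := by
      linarith only [hp13, mul_le_mul_of_nonneg_right h6 (abs_nonneg w03), k03, mul_nonneg ht.le hF, hG]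
    have k22 : t*|w22| ≤ 4*G + t*|F| := by
      linarith only [hp22, mul_le_mul_of_nonneg_right h6 (abs_nonneg w02), k02, mul_nonneg ht.le hF, hG]
    have k23 : t*|w23| ≤ 4*G + t*|F| := by
      linarith only [hp23, mul_le_mul_of_nonneg_right h6 (abs_nonneg w03), k03, mul_nonneg ht.le hF, hG]
    have k33 : t*|w33| ≤ 4*G + t*|F| := by
      linarith only [hp33, mul_le_mul_of_nonneg_right h6 (abs_nonneg w03), k03, mul_nonneg ht.le hF, hG]
    have habstr : |t - r| ≤ t := by rw [abs_le]; constructor <;> linarith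
    have hS : (0:ℝ) ≤ |w00| + |w01| + |w02| + |w03| + |w11| + |w12| + |w13| + |w22| + |w23| + |w33| := by positivity
    have step : (1 + |t - r|) * (|w00| + |w01| + |w02| + |w03| + |w11| + |w12| + |w13| + |w22| + |w23| + |w33|) ≤ (1 + t) * (|w00| + |w01| + |w02| + |w03| + |w11| + |w12| + |w13| + |w22| + |w23| + |w33|) :=
      mul_le_mul_of_nonneg_right (by linarith) hS
    have expand : (1 + t) * (|w00| + |w01| + |w02| + |w03| + |w11| + |w12| + |w13| + |w22| + |w23| + |w33|) = (|w00| + |w01| + |w02| + |w03| + |w11| + |w12| + |w13| + |w22| + |w23| + |w33|) + (t*|w00| + t*|w01| + t*|w02| + t*|w03| + t*|w11| + t*|w12| + t*|w13| + t*|w22| + t*|w23| + t*|w33|) := by ring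
    refine step.trans ?_
    rw [expand]
    have hexp : (t + r) * |F| = t*|F| + r*|F| := by ring
    rw [hexp]
    linarith only [hG, k00, k01, k02, k03, k11, k12, k13, k22, k23, k33, hw00, hw01, hw02, hw03, hw11, hw12, hw13, hw22, hw23, hw33, mul_nonneg ht.le hF, mul_nonneg hr.le hF]

section SDDcalc

variable {U : (Fin 4 → ℝ) → ℝ} {z : Fin 4 → ℝ}

theorem sdd_diff_fderiv (hCA : ContDiffAt ℝ 2 U z) : DifferentiableAt ℝ (fderiv ℝ U) z :=
  (hCA.fderiv_right (m := 1) (by norm_num)).differentiableAt (by norm_num)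

theorem sdd_diff_pd (hCA : ContDiffAt ℝ 2 U z) (b : Fin 4) :
    DifferentiableAt ℝ (pd b U) z :=
  (sdd_diff_fderiv hCA).clm_apply (differentiableAt_const _)

theorem sdd_pd_pd (hCA : ContDiffAt ℝ 2 U z) (a b : Fin 4) :
    pd a (pd b U) z = fderiv ℝ (fderiv ℝ U) z (Pi.single a 1) (Pi.single b 1) := by
  show fderiv ℝ (fun y => fderiv ℝ U y (Pi.single b 1)) z (Pi.single a 1) = _
  rw [fderiv_clm_apply (sdd_diff_fderiv hCA) (differentiableAt_const _)]
  simp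

theorem sdd_symm (hCA : ContDiffAt ℝ 2 U z) (a b : Fin 4) :
    pd a (pd b U) z = pd b (pd a U) z := by
  rw [sdd_pd_pd hCA a b, sdd_pd_pd hCA b a]
  exact (hCA.isSymmSndFDerivAt (by simp)) _ _

theorem sdd_pd_boost (hCA : ContDiffAt ℝ 2 U z) (a : Fin 4) (i : Fin 3) :
    pd a (boost i U) z =
      z 0 * pd a (pd i.succ U) z + pd i.succ U z * (Pi.single a 1 : Fin 4 → ℝ) 0
      + (z i.succ * pd a (pd 0 U) z + pd 0 U z * (Pi.single a 1 : Fin 4 → ℝ) i.succ) := by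
  have h0 : HasFDerivAt (fun y : Fin 4 → ℝ => y 0)
      (ContinuousLinearMap.proj 0 : (Fin 4 → ℝ) →L[ℝ] ℝ) z :=
    (ContinuousLinearMap.proj 0 : (Fin 4 → ℝ) →L[ℝ] ℝ).hasFDerivAt
  have hi : HasFDerivAt (fun y : Fin 4 → ℝ => y i.succ)
      (ContinuousLinearMap.proj i.succ : (Fin 4 → ℝ) →L[ℝ] ℝ) z :=
    (ContinuousLinearMap.proj i.succ : (Fin 4 → ℝ) →L[ℝ] ℝ).hasFDerivAt
  have hp1 : HasFDerivAt (pd i.succ U) (fderiv ℝ (pd i.succ U) z) z :=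
    (sdd_diff_pd hCA i.succ).hasFDerivAt
  have hp0 : HasFDerivAt (pd 0 U) (fderiv ℝ (pd 0 U) z) z :=
    (sdd_diff_pd hCA 0).hasFDerivAt
  have H := ((h0.mul hp1).add (hi.mul hp0)).fderiv
  have e : pd a (boost i U) z = fderiv ℝ (boost i U) z (Pi.single a 1) := rfl
  rw [e]
  show fderiv ℝ (fun y : Fin 4 → ℝ => y 0 * pd i.succ U y + y i.succ * pd 0 U y) z
      (Pi.single a 1) = _
  erw [H]
  simp [ContinuousLinearMap.add_apply, ContinuousLinearMap.smul_apply, smul_eq_mul]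
  ring_nf
  rfl

theorem sdd_pd_rot (hCA : ContDiffAt ℝ 2 U z) (a : Fin 4) (i j : Fin 3) :
    pd a (rot i j U) z =
      z i.succ * pd a (pd j.succ U) z + pd j.succ U z * (Pi.single a 1 : Fin 4 → ℝ) i.succ
      - (z j.succ * pd a (pd i.succ U) z + pd i.succ U z * (Pi.single a 1 : Fin 4 → ℝ) j.succ) := by
  have hi : HasFDerivAt (fun y : Fin 4 → ℝ => y i.succ)
      (ContinuousLinearMap.proj i.succ : (Fin 4 → ℝ) →L[ℝ] ℝ) z :=
    (ContinuousLinearMap.proj i.succ : (Fin 4 → ℝ) →L[ℝ] ℝ).hasFDerivAt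
  have hj : HasFDerivAt (fun y : Fin 4 → ℝ => y j.succ)
      (ContinuousLinearMap.proj j.succ : (Fin 4 → ℝ) →L[ℝ] ℝ) z :=
    (ContinuousLinearMap.proj j.succ : (Fin 4 → ℝ) →L[ℝ] ℝ).hasFDerivAt
  have hpj : HasFDerivAt (pd j.succ U) (fderiv ℝ (pd j.succ U) z) z :=
    (sdd_diff_pd hCA j.succ).hasFDerivAt
  have hpi : HasFDerivAt (pd i.succ U) (fderiv ℝ (pd i.succ U) z) z :=
    (sdd_diff_pd hCA i.succ).hasFDerivAt
  have H := ((hi.mul hpj).sub (hj.mul hpi)).fderiv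
  have e : pd a (rot i j U) z = fderiv ℝ (rot i j U) z (Pi.single a 1) := rfl
  rw [e]
  show fderiv ℝ (fun y : Fin 4 → ℝ => y i.succ * pd j.succ U y - y j.succ * pd i.succ U y) z
      (Pi.single a 1) = _
  erw [H]
  simp [ContinuousLinearMap.add_apply, ContinuousLinearMap.smul_apply, smul_eq_mul]
  ring_nf
  rfl

theorem sdd_dg (U : (Fin 4 → ℝ) → ℝ) (z : Fin 4 → ℝ) (a : Fin 4) (k : Fin 11) :
    |pd a (gam k U) z| ≤ dGam U z := by
  have h1 : (pd a (gam k U) z)^2 ≤ ∑ k' : Fin 11, (pd a (gam k' U) z)^2 :=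
    Finset.single_le_sum (f := fun k' : Fin 11 => (pd a (gam k' U) z)^2)
      (fun i _ => sq_nonneg _) (Finset.mem_univ k)
  have h2 : (∑ k' : Fin 11, (pd a (gam k' U) z)^2)
      ≤ ∑ a' : Fin 4, ∑ k' : Fin 11, (pd a' (gam k' U) z)^2 :=
    Finset.single_le_sum (f := fun a' : Fin 4 => ∑ k' : Fin 11, (pd a' (gam k' U) z)^2)
      (fun i _ => Finset.sum_nonneg fun _ _ => sq_nonneg _) (Finset.mem_univ a)
  calc |pd a (gam k U) z| = Real.sqrt ((pd a (gam k U) z)^2) := (Real.sqrt_sq_eq_abs _).symm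
    _ ≤ dGam U z := Real.sqrt_le_sqrt (h1.trans h2)

theorem sdd_delta (b c : Fin 4) : |(Pi.single b 1 : Fin 4 → ℝ) c| ≤ 1 := by
  rw [Pi.single_apply]; split <;> norm_num

theorem sdd_boost_bound (hCA : ContDiffAt ℝ 2 U z) (i : Fin 3) (b : Fin 4)
    (hgb : |pd b (boost i U) z| ≤ dGam U z)
    (hf1 : |pd i.succ U z| ≤ dGam U z) (hf0 : |pd 0 U z| ≤ dGam U z) :
    |z 0 * pd b (pd i.succ U) z + z i.succ * pd b (pd 0 U) z| ≤ 3 * dGam U z := by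
  have e := sdd_pd_boost hCA b i
  have e2 : z 0 * pd b (pd i.succ U) z + z i.succ * pd b (pd 0 U) z
      = pd b (boost i U) z - pd i.succ U z * (Pi.single b 1 : Fin 4 → ℝ) 0
        - pd 0 U z * (Pi.single b 1 : Fin 4 → ℝ) i.succ := by rw [e]; ring
  rw [e2]
  have d1 : |pd i.succ U z * (Pi.single b 1 : Fin 4 → ℝ) 0| ≤ dGam U z * 1 :=
    sdd_mulb hf1 (sdd_delta b 0)
  have d2 : |pd 0 U z * (Pi.single b 1 : Fin 4 → ℝ) i.succ| ≤ dGam U z * 1 :=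
    sdd_mulb hf0 (sdd_delta b i.succ)
  have t1 := sdd_abs_sub (pd b (boost i U) z - pd i.succ U z * (Pi.single b 1 : Fin 4 → ℝ) 0)
    (pd 0 U z * (Pi.single b 1 : Fin 4 → ℝ) i.succ)
  have t2 := sdd_abs_sub (pd b (boost i U) z) (pd i.succ U z * (Pi.single b 1 : Fin 4 → ℝ) 0)
  linarith

theorem sdd_rot_bound (hCA : ContDiffAt ℝ 2 U z) (i j : Fin 3) (b : Fin 4)
    (hgb : |pd b (rot i j U) z| ≤ dGam U z)
    (hfj : |pd j.succ U z| ≤ dGam U z) (hfi : |pd i.succ U z| ≤ dGam U z) :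
    |z i.succ * pd b (pd j.succ U) z - z j.succ * pd b (pd i.succ U) z| ≤ 3 * dGam U z := by
  have e := sdd_pd_rot hCA b i j
  have e2 : z i.succ * pd b (pd j.succ U) z - z j.succ * pd b (pd i.succ U) z
      = pd b (rot i j U) z - pd j.succ U z * (Pi.single b 1 : Fin 4 → ℝ) i.succ
        + pd i.succ U z * (Pi.single b 1 : Fin 4 → ℝ) j.succ := by rw [e]; ring
  rw [e2]
  have d1 : |pd j.succ U z * (Pi.single b 1 : Fin 4 → ℝ) i.succ| ≤ dGam U z * 1 :=
    sdd_mulb hfj (sdd_delta b i.succ)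
  have d2 : |pd i.succ U z * (Pi.single b 1 : Fin 4 → ℝ) j.succ| ≤ dGam U z * 1 :=
    sdd_mulb hfi (sdd_delta b j.succ)
  have t1 := abs_add_le (pd b (rot i j U) z - pd j.succ U z * (Pi.single b 1 : Fin 4 → ℝ) i.succ)
    (pd i.succ U z * (Pi.single b 1 : Fin 4 → ℝ) j.succ)
  have t2 := sdd_abs_sub (pd b (rot i j U) z) (pd j.succ U z * (Pi.single b 1 : Fin 4 → ℝ) i.succ)
  linarith

end SDDcalc

theorem sdd_sqrt3 (a b c : ℝ) : Real.sqrt (a^2 + b^2 + c^2) ≤ |a| + |b| + |c| := by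
  rw [Real.sqrt_le_left (by positivity)]
  nlinarith [sq_abs a, sq_abs b, sq_abs c, mul_nonneg (abs_nonneg a) (abs_nonneg b),
    mul_nonneg (abs_nonneg a) (abs_nonneg c), mul_nonneg (abs_nonneg b) (abs_nonneg c)]

theorem sdd_sqrt_add3 {a b c : ℝ} (ha : 0 ≤ a) (hb : 0 ≤ b) (hc : 0 ≤ c) :
    Real.sqrt (a + b + c) ≤ Real.sqrt a + Real.sqrt b + Real.sqrt c := by
  rw [Real.sqrt_le_left (by positivity)]
  nlinarith [Real.sq_sqrt ha, Real.sq_sqrt hb, Real.sq_sqrt hc, Real.sqrt_nonneg a,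
    Real.sqrt_nonneg b, Real.sqrt_nonneg c,
    mul_nonneg (Real.sqrt_nonneg a) (Real.sqrt_nonneg b),
    mul_nonneg (Real.sqrt_nonneg a) (Real.sqrt_nonneg c),
    mul_nonneg (Real.sqrt_nonneg b) (Real.sqrt_nonneg c)]

theorem sdd_jb_le (s : ℝ) : jb s ≤ 1 + |s| := by
  rw [jb, Real.sqrt_le_left (by positivity)]
  nlinarith [sq_abs s, abs_nonneg s]

theorem sdd_le_jb (s : ℝ) : s ≤ jb s := by
  have h1 : s ≤ |s| := le_abs_self s
  have h2 : |s| = Real.sqrt (s^2) := (Real.sqrt_sq_eq_abs s).symm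
  have h3 : Real.sqrt (s^2) ≤ Real.sqrt (1 + s^2) := Real.sqrt_le_sqrt (by linarith)
  rw [jb]; linarith

theorem sdd_jb_nonneg (s : ℝ) : 0 ≤ jb s := Real.sqrt_nonneg _

/-- **Second-derivative decay estimate.** For `u` of class `C²` on `(0,∞) × ℝ³`,
`t > 0`, `x ≠ 0`:
`⟨t−r⟩ (|∂_tt u| + |∇∂_t u| + |∇²u|) ≲ |∂Γ^{≤1}u| + ⟨t+r⟩|□u|`, absolute constant. -/
theorem second_derivative_decay :
    ∃ C > 0, ∀ U : (Fin 4 → ℝ) → ℝ,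
      ContDiffOn ℝ 2 U {z : Fin 4 → ℝ | 0 < z 0} →
      ∀ z : Fin 4 → ℝ, 0 < z 0 → rad z ≠ 0 →
        jb (z 0 - rad z) *
            (|pd 0 (pd 0 U) z|
              + Real.sqrt (∑ i : Fin 3, (pd i.succ (pd 0 U) z)^2)
              + Real.sqrt (∑ i : Fin 3, ∑ j : Fin 3, (pd i.succ (pd j.succ U) z)^2))
          ≤ C * (dGam U z + jb (z 0 + rad z) * |box U z|) := by
  refine ⟨35840, by norm_num, ?_⟩
  intro U hU z hz hrad
  have hopen : IsOpen {z : Fin 4 → ℝ | 0 < z 0} := isOpen_lt continuous_const (continuous_apply 0)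
  have hCA : ContDiffAt ℝ 2 U z := (hU z hz).contDiffAt (hopen.mem_nhds hz)
  have hG : (0:ℝ) ≤ dGam U z := Real.sqrt_nonneg _
  have hr0 : (0:ℝ) ≤ rad z := Real.sqrt_nonneg _
  have hrpos : 0 < rad z := lt_of_le_of_ne hr0 (Ne.symm hrad)
  have hx : z 1 ^ 2 + z 2 ^ 2 + z 3 ^ 2 = rad z ^ 2 := by
    simp only [show rad z ^ 2 = ∑ i : Fin 3, (z i.succ)^2 from Real.sq_sqrt (by positivity),
      Fin.sum_univ_three, show (0:Fin 3).succ = (1:Fin 4) from rfl, show (1:Fin 3).succ = (2:Fin 4) from rfl, show (2:Fin 3).succ = (3:Fin 4) from rfl]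
  have hsymm : ∀ a b : Fin 4, pd a (pd b U) z = pd b (pd a U) z := sdd_symm hCA
  have hg : ∀ (a : Fin 4) (k : Fin 11), |pd a (gam k U) z| ≤ dGam U z := sdd_dg U z
  have hfd : ∀ a : Fin 4, |pd a U z| ≤ dGam U z := fun a => hg a 0
  have hww : ∀ a b : Fin 4, |pd a (pd b U) z| ≤ dGam U z := by
    intro a b
    fin_cases b
    exacts [hg a 1, hg a 2, hg a 3, hg a 4]
  have hBB : ∀ (i : Fin 3) (b : Fin 4),
      |z 0 * pd b (pd i.succ U) z + z i.succ * pd b (pd 0 U) z| ≤ 3 * dGam U z := by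
    intro i b
    refine sdd_boost_bound hCA i b ?_ (hfd i.succ) (hfd 0)
    fin_cases i
    exacts [hg b 5, hg b 6, hg b 7]
  have hRR : ∀ (i j : Fin 3) (b : Fin 4), |pd b (rot i j U) z| ≤ dGam U z →
      |z i.succ * pd b (pd j.succ U) z - z j.succ * pd b (pd i.succ U) z| ≤ 3 * dGam U z :=
    fun i j b h => sdd_rot_bound hCA i j b h (hfd j.succ) (hfd i.succ)
  have htrace : pd 0 (pd 0 U) z - (pd 1 (pd 1 U) z + pd 2 (pd 2 U) z + pd 3 (pd 3 U) z)
      = box U z := by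
    unfold box lap
    simp only [Fin.sum_univ_three, show (0:Fin 3).succ = (1:Fin 4) from rfl, show (1:Fin 3).succ = (2:Fin 4) from rfl, show (2:Fin 3).succ = (3:Fin 4) from rfl]
  have hB10 : |z 0 * pd 0 (pd 1 U) z + z 1 * pd 0 (pd 0 U) z| ≤ 3 * dGam U z := by
    have h : |z 0 * pd 0 (pd 1 U) z + z 1 * pd 0 (pd 0 U) z| ≤ 3 * dGam U z := hBB 0 0
    exact h
  have hB11 : |z 0 * pd 1 (pd 1 U) z + z 1 * pd 0 (pd 1 U) z| ≤ 3 * dGam U z := by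
    have h : |z 0 * pd 1 (pd 1 U) z + z 1 * pd 1 (pd 0 U) z| ≤ 3 * dGam U z := hBB 0 1
    rw [hsymm 1 0] at h
    exact h
  have hB12 : |z 0 * pd 1 (pd 2 U) z + z 1 * pd 0 (pd 2 U) z| ≤ 3 * dGam U z := by
    have h : |z 0 * pd 2 (pd 1 U) z + z 1 * pd 2 (pd 0 U) z| ≤ 3 * dGam U z := hBB 0 2
    rw [hsymm 2 1, hsymm 2 0] at h
    exact h
  have hB13 : |z 0 * pd 1 (pd 3 U) z + z 1 * pd 0 (pd 3 U) z| ≤ 3 * dGam U z := by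
    have h : |z 0 * pd 3 (pd 1 U) z + z 1 * pd 3 (pd 0 U) z| ≤ 3 * dGam U z := hBB 0 3
    rw [hsymm 3 1, hsymm 3 0] at h
    exact h
  have hB20 : |z 0 * pd 0 (pd 2 U) z + z 2 * pd 0 (pd 0 U) z| ≤ 3 * dGam U z := by
    have h : |z 0 * pd 0 (pd 2 U) z + z 2 * pd 0 (pd 0 U) z| ≤ 3 * dGam U z := hBB 1 0
    exact h
  have hB21 : |z 0 * pd 1 (pd 2 U) z + z 2 * pd 0 (pd 1 U) z| ≤ 3 * dGam U z := by
    have h : |z 0 * pd 1 (pd 2 U) z + z 2 * pd 1 (pd 0 U) z| ≤ 3 * dGam U z := hBB 1 1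
    rw [hsymm 1 0] at h
    exact h
  have hB22 : |z 0 * pd 2 (pd 2 U) z + z 2 * pd 0 (pd 2 U) z| ≤ 3 * dGam U z := by
    have h : |z 0 * pd 2 (pd 2 U) z + z 2 * pd 2 (pd 0 U) z| ≤ 3 * dGam U z := hBB 1 2
    rw [hsymm 2 0] at h
    exact h
  have hB23 : |z 0 * pd 2 (pd 3 U) z + z 2 * pd 0 (pd 3 U) z| ≤ 3 * dGam U z := by
    have h : |z 0 * pd 3 (pd 2 U) z + z 2 * pd 3 (pd 0 U) z| ≤ 3 * dGam U z := hBB 1 3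
    rw [hsymm 3 2, hsymm 3 0] at h
    exact h
  have hB30 : |z 0 * pd 0 (pd 3 U) z + z 3 * pd 0 (pd 0 U) z| ≤ 3 * dGam U z := by
    have h : |z 0 * pd 0 (pd 3 U) z + z 3 * pd 0 (pd 0 U) z| ≤ 3 * dGam U z := hBB 2 0
    exact h
  have hB31 : |z 0 * pd 1 (pd 3 U) z + z 3 * pd 0 (pd 1 U) z| ≤ 3 * dGam U z := by
    have h : |z 0 * pd 1 (pd 3 U) z + z 3 * pd 1 (pd 0 U) z| ≤ 3 * dGam U z := hBB 2 1
    rw [hsymm 1 0] at h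
    exact h
  have hB32 : |z 0 * pd 2 (pd 3 U) z + z 3 * pd 0 (pd 2 U) z| ≤ 3 * dGam U z := by
    have h : |z 0 * pd 2 (pd 3 U) z + z 3 * pd 2 (pd 0 U) z| ≤ 3 * dGam U z := hBB 2 2
    rw [hsymm 2 0] at h
    exact h
  have hB33 : |z 0 * pd 3 (pd 3 U) z + z 3 * pd 0 (pd 3 U) z| ≤ 3 * dGam U z := by
    have h : |z 0 * pd 3 (pd 3 U) z + z 3 * pd 3 (pd 0 U) z| ≤ 3 * dGam U z := hBB 2 3
    rw [hsymm 3 0] at h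
    exact h
  have hR120 : |z 1 * pd 0 (pd 2 U) z - z 2 * pd 0 (pd 1 U) z| ≤ 3 * dGam U z := by
    have h : |z 1 * pd 0 (pd 2 U) z - z 2 * pd 0 (pd 1 U) z| ≤ 3 * dGam U z := hRR 0 1 0 (hg 0 8)
    exact h
  have hR121 : |z 1 * pd 1 (pd 2 U) z - z 2 * pd 1 (pd 1 U) z| ≤ 3 * dGam U z := by
    have h : |z 1 * pd 1 (pd 2 U) z - z 2 * pd 1 (pd 1 U) z| ≤ 3 * dGam U z := hRR 0 1 1 (hg 1 8)
    exact h
  have hR122 : |z 1 * pd 2 (pd 2 U) z - z 2 * pd 1 (pd 2 U) z| ≤ 3 * dGam U z := by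
    have h : |z 1 * pd 2 (pd 2 U) z - z 2 * pd 2 (pd 1 U) z| ≤ 3 * dGam U z := hRR 0 1 2 (hg 2 8)
    rw [hsymm 2 1] at h
    exact h
  have hR123 : |z 1 * pd 2 (pd 3 U) z - z 2 * pd 1 (pd 3 U) z| ≤ 3 * dGam U z := by
    have h : |z 1 * pd 3 (pd 2 U) z - z 2 * pd 3 (pd 1 U) z| ≤ 3 * dGam U z := hRR 0 1 3 (hg 3 8)
    rw [hsymm 3 2, hsymm 3 1] at h
    exact h
  have hR130 : |z 1 * pd 0 (pd 3 U) z - z 3 * pd 0 (pd 1 U) z| ≤ 3 * dGam U z := by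
    have h : |z 1 * pd 0 (pd 3 U) z - z 3 * pd 0 (pd 1 U) z| ≤ 3 * dGam U z := hRR 0 2 0 (hg 0 9)
    exact h
  have hR131 : |z 1 * pd 1 (pd 3 U) z - z 3 * pd 1 (pd 1 U) z| ≤ 3 * dGam U z := by
    have h : |z 1 * pd 1 (pd 3 U) z - z 3 * pd 1 (pd 1 U) z| ≤ 3 * dGam U z := hRR 0 2 1 (hg 1 9)
    exact h
  have hR132 : |z 1 * pd 2 (pd 3 U) z - z 3 * pd 1 (pd 2 U) z| ≤ 3 * dGam U z := by
    have h : |z 1 * pd 2 (pd 3 U) z - z 3 * pd 2 (pd 1 U) z| ≤ 3 * dGam U z := hRR 0 2 2 (hg 2 9)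
    rw [hsymm 2 1] at h
    exact h
  have hR133 : |z 1 * pd 3 (pd 3 U) z - z 3 * pd 1 (pd 3 U) z| ≤ 3 * dGam U z := by
    have h : |z 1 * pd 3 (pd 3 U) z - z 3 * pd 3 (pd 1 U) z| ≤ 3 * dGam U z := hRR 0 2 3 (hg 3 9)
    rw [hsymm 3 1] at h
    exact h
  have hR230 : |z 2 * pd 0 (pd 3 U) z - z 3 * pd 0 (pd 2 U) z| ≤ 3 * dGam U z := by
    have h : |z 2 * pd 0 (pd 3 U) z - z 3 * pd 0 (pd 2 U) z| ≤ 3 * dGam U z := hRR 1 2 0 (hg 0 10)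
    exact h
  have hR231 : |z 2 * pd 1 (pd 3 U) z - z 3 * pd 1 (pd 2 U) z| ≤ 3 * dGam U z := by
    have h : |z 2 * pd 1 (pd 3 U) z - z 3 * pd 1 (pd 2 U) z| ≤ 3 * dGam U z := hRR 1 2 1 (hg 1 10)
    exact h
  have hR232 : |z 2 * pd 2 (pd 3 U) z - z 3 * pd 2 (pd 2 U) z| ≤ 3 * dGam U z := by
    have h : |z 2 * pd 2 (pd 3 U) z - z 3 * pd 2 (pd 2 U) z| ≤ 3 * dGam U z := hRR 1 2 2 (hg 2 10)
    exact h
  have hR233 : |z 2 * pd 3 (pd 3 U) z - z 3 * pd 2 (pd 3 U) z| ≤ 3 * dGam U z := by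
    have h : |z 2 * pd 3 (pd 3 U) z - z 3 * pd 3 (pd 2 U) z| ≤ 3 * dGam U z := hRR 1 2 3 (hg 3 10)
    rw [hsymm 3 2] at h
    exact h
  have hcore := sdd_core (z 0) (rad z) (z 1) (z 2) (z 3) (dGam U z) (box U z)
    (pd 0 (pd 0 U) z) (pd 0 (pd 1 U) z) (pd 0 (pd 2 U) z) (pd 0 (pd 3 U) z) (pd 1 (pd 1 U) z) (pd 1 (pd 2 U) z) (pd 1 (pd 3 U) z) (pd 2 (pd 2 U) z) (pd 2 (pd 3 U) z) (pd 3 (pd 3 U) z)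
    hz hrpos hx hG (hww 0 0) (hww 0 1) (hww 0 2) (hww 0 3) (hww 1 1) (hww 1 2) (hww 1 3) (hww 2 2) (hww 2 3) (hww 3 3) hB10 hB11 hB12 hB13 hB20 hB21 hB22 hB23 hB30 hB31 hB32 hB33 hR120 hR121 hR122 hR123 hR130 hR131 hR132 hR133 hR230 hR231 hR232 hR233 htrace
  have hT2 : Real.sqrt (∑ i : Fin 3, (pd i.succ (pd 0 U) z)^2)
      ≤ |pd 0 (pd 1 U) z| + |pd 0 (pd 2 U) z| + |pd 0 (pd 3 U) z| := by
    simp only [Fin.sum_univ_three, show (0:Fin 3).succ = (1:Fin 4) from rfl, show (1:Fin 3).succ = (2:Fin 4) from rfl, show (2:Fin 3).succ = (3:Fin 4) from rfl]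
    calc Real.sqrt ((pd 1 (pd 0 U) z)^2 + (pd 2 (pd 0 U) z)^2 + (pd 3 (pd 0 U) z)^2)
        ≤ |pd 1 (pd 0 U) z| + |pd 2 (pd 0 U) z| + |pd 3 (pd 0 U) z| := sdd_sqrt3 _ _ _
      _ = |pd 0 (pd 1 U) z| + |pd 0 (pd 2 U) z| + |pd 0 (pd 3 U) z| := by
          rw [hsymm 1 0, hsymm 2 0, hsymm 3 0]
  have hT3 : Real.sqrt (∑ i : Fin 3, ∑ j : Fin 3, (pd i.succ (pd j.succ U) z)^2)
      ≤ (|pd 1 (pd 1 U) z| + |pd 1 (pd 2 U) z| + |pd 1 (pd 3 U) z|)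
        + (|pd 1 (pd 2 U) z| + |pd 2 (pd 2 U) z| + |pd 2 (pd 3 U) z|)
        + (|pd 1 (pd 3 U) z| + |pd 2 (pd 3 U) z| + |pd 3 (pd 3 U) z|) := by
    simp only [Fin.sum_univ_three, show (0:Fin 3).succ = (1:Fin 4) from rfl, show (1:Fin 3).succ = (2:Fin 4) from rfl, show (2:Fin 3).succ = (3:Fin 4) from rfl]
    have r1 := sdd_sqrt3 (pd 1 (pd 1 U) z) (pd 1 (pd 2 U) z) (pd 1 (pd 3 U) z)
    have r2 := sdd_sqrt3 (pd 2 (pd 1 U) z) (pd 2 (pd 2 U) z) (pd 2 (pd 3 U) z)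
    have r3 := sdd_sqrt3 (pd 3 (pd 1 U) z) (pd 3 (pd 2 U) z) (pd 3 (pd 3 U) z)
    have hadd := sdd_sqrt_add3
      (by positivity : (0:ℝ) ≤ (pd 1 (pd 1 U) z)^2 + (pd 1 (pd 2 U) z)^2 + (pd 1 (pd 3 U) z)^2)
      (by positivity : (0:ℝ) ≤ (pd 2 (pd 1 U) z)^2 + (pd 2 (pd 2 U) z)^2 + (pd 2 (pd 3 U) z)^2)
      (by positivity : (0:ℝ) ≤ (pd 3 (pd 1 U) z)^2 + (pd 3 (pd 2 U) z)^2 + (pd 3 (pd 3 U) z)^2)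
    calc Real.sqrt (((pd 1 (pd 1 U) z)^2 + (pd 1 (pd 2 U) z)^2 + (pd 1 (pd 3 U) z)^2)
          + ((pd 2 (pd 1 U) z)^2 + (pd 2 (pd 2 U) z)^2 + (pd 2 (pd 3 U) z)^2)
          + ((pd 3 (pd 1 U) z)^2 + (pd 3 (pd 2 U) z)^2 + (pd 3 (pd 3 U) z)^2))
        ≤ (|pd 1 (pd 1 U) z| + |pd 1 (pd 2 U) z| + |pd 1 (pd 3 U) z|)
          + (|pd 2 (pd 1 U) z| + |pd 2 (pd 2 U) z| + |pd 2 (pd 3 U) z|)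
          + (|pd 3 (pd 1 U) z| + |pd 3 (pd 2 U) z| + |pd 3 (pd 3 U) z|) := by linarith
      _ = (|pd 1 (pd 1 U) z| + |pd 1 (pd 2 U) z| + |pd 1 (pd 3 U) z|)
          + (|pd 1 (pd 2 U) z| + |pd 2 (pd 2 U) z| + |pd 2 (pd 3 U) z|)
          + (|pd 1 (pd 3 U) z| + |pd 2 (pd 3 U) z| + |pd 3 (pd 3 U) z|) := by
          rw [hsymm 2 1, hsymm 3 1, hsymm 3 2]
  have hjb1 : jb (z 0 - rad z) ≤ 1 + |z 0 - rad z| := sdd_jb_le _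
  have hjb2 : z 0 + rad z ≤ jb (z 0 + rad z) := sdd_le_jb _
  set T := |pd 0 (pd 0 U) z|
      + Real.sqrt (∑ i : Fin 3, (pd i.succ (pd 0 U) z)^2)
      + Real.sqrt (∑ i : Fin 3, ∑ j : Fin 3, (pd i.succ (pd j.succ U) z)^2) with hT
  have hTnn : 0 ≤ T := by
    rw [hT]; positivity
  have A1 : jb (z 0 - rad z) * T ≤ (1 + |z 0 - rad z|) * T :=
    mul_le_mul_of_nonneg_right hjb1 hTnn
  have A2 : T ≤ 2 * (|pd 0 (pd 0 U) z| + |pd 0 (pd 1 U) z| + |pd 0 (pd 2 U) z| + |pd 0 (pd 3 U) z| + |pd 1 (pd 1 U) z| + |pd 1 (pd 2 U) z| + |pd 1 (pd 3 U) z| + |pd 2 (pd 2 U) z| + |pd 2 (pd 3 U) z| + |pd 3 (pd 3 U) z|) := by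
    rw [hT]
    have n1 : (0:ℝ) ≤ |pd 0 (pd 1 U) z| := abs_nonneg _
    have n2 : (0:ℝ) ≤ |pd 0 (pd 2 U) z| := abs_nonneg _
    have n3 : (0:ℝ) ≤ |pd 0 (pd 3 U) z| := abs_nonneg _
    have n4 : (0:ℝ) ≤ |pd 0 (pd 0 U) z| := abs_nonneg _
    have n5 : (0:ℝ) ≤ |pd 1 (pd 2 U) z| := abs_nonneg _
    have n6 : (0:ℝ) ≤ |pd 1 (pd 3 U) z| := abs_nonneg _
    have n7 : (0:ℝ) ≤ |pd 2 (pd 3 U) z| := abs_nonneg _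
    have n8 : (0:ℝ) ≤ |pd 1 (pd 1 U) z| := abs_nonneg _
    have n9 : (0:ℝ) ≤ |pd 2 (pd 2 U) z| := abs_nonneg _
    have n10 : (0:ℝ) ≤ |pd 3 (pd 3 U) z| := abs_nonneg _
    linarith [hT2, hT3]
  have A3 : (1 + |z 0 - rad z|) * T ≤ (1 + |z 0 - rad z|) * (2 * (|pd 0 (pd 0 U) z| + |pd 0 (pd 1 U) z| + |pd 0 (pd 2 U) z| + |pd 0 (pd 3 U) z| + |pd 1 (pd 1 U) z| + |pd 1 (pd 2 U) z| + |pd 1 (pd 3 U) z| + |pd 2 (pd 2 U) z| + |pd 2 (pd 3 U) z| + |pd 3 (pd 3 U) z|)) :=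
    mul_le_mul_of_nonneg_left A2 (by positivity)
  have A4 : (1 + |z 0 - rad z|) * (2 * (|pd 0 (pd 0 U) z| + |pd 0 (pd 1 U) z| + |pd 0 (pd 2 U) z| + |pd 0 (pd 3 U) z| + |pd 1 (pd 1 U) z| + |pd 1 (pd 2 U) z| + |pd 1 (pd 3 U) z| + |pd 2 (pd 2 U) z| + |pd 2 (pd 3 U) z| + |pd 3 (pd 3 U) z|))
      = 2 * ((1 + |z 0 - rad z|) * (|pd 0 (pd 0 U) z| + |pd 0 (pd 1 U) z| + |pd 0 (pd 2 U) z| + |pd 0 (pd 3 U) z| + |pd 1 (pd 1 U) z| + |pd 1 (pd 2 U) z| + |pd 1 (pd 3 U) z| + |pd 2 (pd 2 U) z| + |pd 2 (pd 3 U) z| + |pd 3 (pd 3 U) z|)) := by ring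
  have A5 : 2 * ((1 + |z 0 - rad z|) * (|pd 0 (pd 0 U) z| + |pd 0 (pd 1 U) z| + |pd 0 (pd 2 U) z| + |pd 0 (pd 3 U) z| + |pd 1 (pd 1 U) z| + |pd 1 (pd 2 U) z| + |pd 1 (pd 3 U) z| + |pd 2 (pd 2 U) z| + |pd 2 (pd 3 U) z| + |pd 3 (pd 3 U) z|))
      ≤ 2 * (17920 * dGam U z + 60 * ((z 0 + rad z) * |box U z|)) := by linarith [hcore]
  have A6 : 2 * (17920 * dGam U z + 60 * ((z 0 + rad z) * |box U z|))
      ≤ 35840 * (dGam U z + jb (z 0 + rad z) * |box U z|) := by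
    have h4' : (z 0 + rad z) * |box U z| ≤ jb (z 0 + rad z) * |box U z| :=
      mul_le_mul_of_nonneg_right hjb2 (abs_nonneg _)
    have h5 : (0:ℝ) ≤ jb (z 0 + rad z) * |box U z| :=
      mul_nonneg (sdd_jb_nonneg _) (abs_nonneg _)
    linarith
  calc jb (z 0 - rad z) * T ≤ (1 + |z 0 - rad z|) * T := A1
    _ ≤ (1 + |z 0 - rad z|) * (2 * (|pd 0 (pd 0 U) z| + |pd 0 (pd 1 U) z| + |pd 0 (pd 2 U) z| + |pd 0 (pd 3 U) z| + |pd 1 (pd 1 U) z| + |pd 1 (pd 2 U) z| + |pd 1 (pd 3 U) z| + |pd 2 (pd 2 U) z| + |pd 2 (pd 3 U) z| + |pd 3 (pd 3 U) z|)) := A3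
    _ = 2 * ((1 + |z 0 - rad z|) * (|pd 0 (pd 0 U) z| + |pd 0 (pd 1 U) z| + |pd 0 (pd 2 U) z| + |pd 0 (pd 3 U) z| + |pd 1 (pd 1 U) z| + |pd 1 (pd 2 U) z| + |pd 1 (pd 3 U) z| + |pd 2 (pd 2 U) z| + |pd 2 (pd 3 U) z| + |pd 3 (pd 3 U) z|)) := A4
    _ ≤ 2 * (17920 * dGam U z + 60 * ((z 0 + rad z) * |box U z|)) := A5
    _ ≤ 35840 * (dGam U z + jb (z 0 + rad z) * |box U z|) := A6
end

section
/- Let h : ℝ → ℝ be a Schwartz function, t ≥ 1, and suppose t/2 ≤ r < t. Then (t−r) r² |h(r)|² ≲ ∫_r^t |h(ρ)|² ρ² dρ + ∫_r^t |t−ρ|² |h'(ρ)|² ρ² dρ. -/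
open MeasureTheory intervalIntegral

/-- **1D weighted Sobolev estimate (interior region).** For `h ∈ 𝒮(ℝ)`, `t ≥ 1`,
`t/2 ≤ r < t`:
`(t−r) r² h(r)² ≲ ∫_r^t h(ρ)² ρ² dρ + ∫_r^t (t−ρ)² h'(ρ)² ρ² dρ`, absolute constant. -/
theorem weighted_sobolev_interior :
    ∃ C > 0, ∀ (h : SchwartzMap ℝ ℝ) (t r : ℝ), 1 ≤ t → t / 2 ≤ r → r < t →
      (t - r) * r^2 * (h r)^2
        ≤ C * ((∫ ρ in r..t, (h ρ)^2 * ρ^2)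
            + ∫ ρ in r..t, |t - ρ|^2 * (deriv h ρ)^2 * ρ^2) := by
  refine ⟨2, by norm_num, ?_⟩
  intro h t r ht hr2 hrt
  have hr0 : 0 < r := lt_of_lt_of_le (by linarith) hr2
  have hcont : Continuous (fun x => deriv h x) := (h.smooth ⊤).continuous_deriv (by exact_mod_cast le_top)
  have hcontsm : Continuous fun x => h x := h.continuous
  have hdiff : ∀ x : ℝ, HasDerivAt h (deriv h x) x := fun x =>
    (((h.smooth ⊤).differentiable (by simp)) x).hasDerivAt
  -- derivative of g ρ = (t - ρ) * (h ρ)^2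
  have hg : ∀ x ∈ Set.uIcc r t, HasDerivAt (fun ρ => (t - ρ) * (h ρ)^2)
      ((-1) * (h x)^2 + (t - x) * (2 * h x ^ 1 * deriv h x)) x := by
    intro x _
    exact ((hasDerivAt_id x).const_sub t).mul ((hdiff x).pow 2)
  have hcg' : Continuous fun x => (-1) * (h x)^2 + (t - x) * (2 * h x ^ 1 * deriv h x) := by
    fun_prop
  have hint := intervalIntegral.integral_eq_sub_of_hasDerivAt hg
    (hcg'.intervalIntegrable r t)
  simp only [sub_self, zero_mul] at hint
  -- key identity
  have key : (t - r) * (h r)^2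
      = ∫ ρ in r..t, ((h ρ)^2 - (t - ρ) * (2 * h ρ ^ 1 * deriv h ρ)) := by
    have : ∫ ρ in r..t, ((h ρ)^2 - (t - ρ) * (2 * h ρ ^ 1 * deriv h ρ))
        = - ∫ ρ in r..t, ((-1) * (h ρ)^2 + (t - ρ) * (2 * h ρ ^ 1 * deriv h ρ)) := by
      rw [← intervalIntegral.integral_neg]
      congr 1; ext ρ; ring
    rw [this, hint]; ring
  have key2 : (t - r) * r^2 * (h r)^2
      = ∫ ρ in r..t, r^2 * ((h ρ)^2 - (t - ρ) * (2 * h ρ ^ 1 * deriv h ρ)) := by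
    rw [intervalIntegral.integral_const_mul, ← key]; ring
  rw [key2]
  have hI1 : IntervalIntegrable (fun ρ => (h ρ)^2 * ρ^2) volume r t := by
    apply Continuous.intervalIntegrable; fun_prop
  have hI2 : IntervalIntegrable (fun ρ => |t - ρ|^2 * (deriv h ρ)^2 * ρ^2) volume r t := by
    apply Continuous.intervalIntegrable
    have : Continuous fun ρ : ℝ => |t - ρ| := (continuous_const.sub continuous_id).abs
    fun_prop
  have hILHS : IntervalIntegrable
      (fun ρ => r^2 * ((h ρ)^2 - (t - ρ) * (2 * h ρ ^ 1 * deriv h ρ))) volume r t := by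
    apply Continuous.intervalIntegrable; fun_prop
  calc (∫ ρ in r..t, r^2 * ((h ρ)^2 - (t - ρ) * (2 * h ρ ^ 1 * deriv h ρ)))
      ≤ ∫ ρ in r..t, (2 * ((h ρ)^2 * ρ^2) + 2 * (|t - ρ|^2 * (deriv h ρ)^2 * ρ^2)) := by
        apply intervalIntegral.integral_mono_on hrt.le hILHS
        · exact ((hI1.const_mul 2).add (hI2.const_mul 2))
        · intro ρ hρ
          have h1 : r ≤ ρ := hρ.1
          have h2 : ρ ≤ t := hρ.2
          have habs : |t - ρ|^2 = (t - ρ)^2 := sq_abs _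
          rw [habs]
          have hrρ : r^2 ≤ ρ^2 := pow_le_pow_left₀ hr0.le h1 2
          have hs : 0 ≤ t - ρ := by linarith
          nlinarith [sq_nonneg (h ρ + (t - ρ) * deriv h ρ), sq_nonneg (h ρ),
            sq_nonneg ((t - ρ) * deriv h ρ), mul_nonneg (sub_nonneg.2 hrρ) (sq_nonneg (h ρ)),
            mul_nonneg (sub_nonneg.2 hrρ) (sq_nonneg ((t - ρ) * deriv h ρ)),
            mul_nonneg (sq_nonneg r) (sq_nonneg (h ρ + (t - ρ) * deriv h ρ)),
            mul_nonneg (sq_nonneg ρ) (sq_nonneg ((t - ρ) * deriv h ρ))]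
    _ = 2 * ((∫ ρ in r..t, (h ρ)^2 * ρ^2)
            + ∫ ρ in r..t, |t - ρ|^2 * (deriv h ρ)^2 * ρ^2) := by
        rw [intervalIntegral.integral_add (hI1.const_mul 2) (hI2.const_mul 2),
          intervalIntegral.integral_const_mul, intervalIntegral.integral_const_mul]
        ring
end

section
/- Let h : ℝ → ℝ be a Schwartz function, t ≥ 1, and suppose r > t. Then (r−t) r² |h(r)|² ≲ ∫_t^r |h(ρ)|² ρ² dρ + ∫_t^r |t−ρ|² |h'(ρ)|² ρ² dρ. -/
open MeasureTheory intervalIntegral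

/-- **1D weighted Sobolev estimate (exterior region).** For `h ∈ 𝒮(ℝ)`, `t ≥ 1`,
`r > t`:
`(r−t) r² h(r)² ≲ ∫_t^r h(ρ)² ρ² dρ + ∫_t^r (t−ρ)² h'(ρ)² ρ² dρ`, absolute constant. -/
theorem weighted_sobolev_exterior :
    ∃ C > 0, ∀ (h : SchwartzMap ℝ ℝ) (t r : ℝ), 1 ≤ t → t < r →
      (r - t) * r^2 * (h r)^2
        ≤ C * ((∫ ρ in t..r, (h ρ)^2 * ρ^2)
            + ∫ ρ in t..r, |t - ρ|^2 * (deriv h ρ)^2 * ρ^2) := by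
  refine ⟨4, by norm_num, fun h t r ht htr => ?_⟩
  have hch : Continuous fun ρ : ℝ => h ρ := h.continuous
  have hcd : Continuous (deriv h) := (h.smooth ⊤).continuous_deriv (by simp)
  set f : ℝ → ℝ := fun ρ => (ρ - t) * ρ^2 * (h ρ)^2 with hf
  set f' : ℝ → ℝ := fun ρ => (1 * ρ^2 + (ρ - t) * (2*ρ)) * (h ρ)^2
      + (ρ - t) * ρ^2 * (2 * h ρ * deriv h ρ) with hf'
  have hd : ∀ ρ, HasDerivAt f (f' ρ) ρ := by
    intro ρ
    have h1 : HasDerivAt (fun ρ : ℝ => ρ - t) 1 ρ := (hasDerivAt_id ρ).sub_const t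
    have h2 : HasDerivAt (fun ρ : ℝ => ρ^2) (2*ρ) ρ := by
      simpa using hasDerivAt_pow 2 ρ
    have hh : HasDerivAt (fun ρ => h ρ) (deriv h ρ) ρ :=
      ((h.smooth ⊤).differentiable (by simp) ρ).hasDerivAt
    have h3 : HasDerivAt (fun ρ => (h ρ)^2) (2 * h ρ * deriv h ρ) ρ := by
      simpa [mul_comm, mul_assoc] using hh.fun_pow 2
    simpa [hf, hf'] using (h1.fun_mul h2).fun_mul h3
  have hcont : Continuous f' := by fun_prop
  have hftc : ∫ ρ in t..r, f' ρ = f r - f t :=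
    intervalIntegral.integral_eq_sub_of_hasDerivAt (fun ρ _ => (hd ρ)) (hcont.intervalIntegrable t r)
  have hft : f t = 0 := by simp [hf]
  have hlhs : (r - t) * r^2 * (h r)^2 = ∫ ρ in t..r, f' ρ := by
    rw [hftc, hft, hf]; ring
  -- integrability of the RHS pieces
  have hint1 : IntervalIntegrable (fun ρ => (h ρ)^2 * ρ^2) volume t r :=
    (Continuous.intervalIntegrable (by fun_prop) t r)
  have hint2 : IntervalIntegrable (fun ρ => |t - ρ|^2 * (deriv h ρ)^2 * ρ^2) volume t r :=
    (Continuous.intervalIntegrable (by fun_prop) t r)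
  have hg : IntervalIntegrable
      (fun ρ => 4 * ((h ρ)^2 * ρ^2) + 4 * (|t - ρ|^2 * (deriv h ρ)^2 * ρ^2)) volume t r :=
    (hint1.const_mul 4).add (hint2.const_mul 4)
  have hmono : (∫ ρ in t..r, f' ρ)
      ≤ ∫ ρ in t..r, (4 * ((h ρ)^2 * ρ^2) + 4 * (|t - ρ|^2 * (deriv h ρ)^2 * ρ^2)) := by
    refine intervalIntegral.integral_mono_on htr.le (hcont.intervalIntegrable t r) hg ?_
    intro ρ hρ
    obtain ⟨h1ρ, h2ρ⟩ := hρ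
    have hρ1 : (1:ℝ) ≤ ρ := ht.trans h1ρ
    have habs : |t - ρ| = ρ - t := by
      rw [abs_sub_comm]; exact abs_of_nonneg (by linarith)
    simp only [hf', habs]
    nlinarith [sq_nonneg (ρ * h ρ - (ρ - t) * ρ * deriv h ρ), sq_nonneg (h ρ),
      sq_nonneg ((ρ - t) * ρ * deriv h ρ),
      mul_nonneg (mul_nonneg (by linarith : (0:ℝ) ≤ t) (by linarith : (0:ℝ) ≤ ρ)) (sq_nonneg (h ρ))]
  have hsplit : (∫ ρ in t..r, (4 * ((h ρ)^2 * ρ^2) + 4 * (|t - ρ|^2 * (deriv h ρ)^2 * ρ^2)))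
      = 4 * ((∫ ρ in t..r, (h ρ)^2 * ρ^2) + ∫ ρ in t..r, |t - ρ|^2 * (deriv h ρ)^2 * ρ^2) := by
    rw [intervalIntegral.integral_add (hint1.const_mul 4) (hint2.const_mul 4),
      intervalIntegral.integral_const_mul, intervalIntegral.integral_const_mul]
    ring
  rw [hlhs]
  calc (∫ ρ in t..r, f' ρ) ≤ _ := hmono
    _ = _ := hsplit
end
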